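/- arXiv:2206.00594 — 6 statements merged into one kernel-verified Lean document; each statement's English description precedes it below -/
import Mathlib

section
/- For every integer k ≥ 1, the graph G_k is O_2-free, does not contain K_{2,3} as a subgraph, and has a feedback vertex set of size at most k − 1. -/
open SimpleGraph

noncomputable def degN {V : Type} (G : SimpleGraph V) (v : V) : ℕ :=
  Nat.card (G.neighborSet v)

def HasIndepCycles {V : Type} (G : SimpleGraph V) (k : ℕ) : Prop :=
  ∃ (b : Fin k → V) (w : ∀ i, G.Walk (b i) (b i)),
    (∀ i, (w i).IsCycle) ∧
    ∀ i j, i ≠ j →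
      ∀ x ∈ (w i).support, ∀ y ∈ (w j).support, x ≠ y ∧ ¬ G.Adj x y

def OkFree {V : Type} (G : SimpleGraph V) (k : ℕ) : Prop :=
  ¬ HasIndepCycles G k

def ContainsKst {V : Type} (G : SimpleGraph V) (s t : ℕ) : Prop :=
  ∃ A B : Finset V, Disjoint A B ∧ A.card = s ∧ B.card = t ∧
    ∀ a ∈ A, ∀ b ∈ B, G.Adj a b

def IsFVS {V : Type} (G : SimpleGraph V) (X : Set V) : Prop :=
  (G.induce {v | v ∉ X}).IsAcyclic

def GirthAtLeast {V : Type} (G : SimpleGraph V) (ℓ : ℕ) : Prop :=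
  ∀ (v : V) (w : G.Walk v v), w.IsCycle → ℓ ≤ w.length

noncomputable def cycleRank {V : Type} (G : SimpleGraph V) : ℤ :=
  (Nat.card G.edgeSet : ℤ) - (Nat.card V : ℤ) + (Nat.card G.ConnectedComponent : ℤ)

/-- The graph `G_k`: a path `u_1, …, u_{2^k−1}` together with an independent set
`v_0, …, v_{k−1}`, where `v_i` is adjacent to `u_j` iff `i` is the 2-adic valuation
of `j`. The path vertex `u_j` is represented by `Sum.inl ⟨j - 1, _⟩`. -/
def Gk (k : ℕ) : SimpleGraph (Fin (2 ^ k - 1) ⊕ Fin k) :=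
  SimpleGraph.fromRel fun a b =>
    match a, b with
    | Sum.inl i, Sum.inl j => (j : ℕ) = (i : ℕ) + 1
    | Sum.inl j, Sum.inr i => padicValNat 2 ((j : ℕ) + 1) = (i : ℕ)
    | _, _ => False

section gkproofs
-- generic cycle helper lemmas
section generic
variable {V : Type} {G : SimpleGraph V}

lemma two_nbrs_start {x : V} {c : G.Walk x x} (hc : c.IsCycle) :
    ∃ y z, y ∈ c.support ∧ z ∈ c.support ∧ y ≠ z ∧ G.Adj x y ∧ G.Adj x z := by
  obtain ⟨b, h, p, rfl⟩ := (Walk.not_nil_iff).mp (fun hn => hc.not_nil hn)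
  have hlen : 2 ≤ p.length := by
    have h3 := hc.three_le_length
    simp only [Walk.length_cons] at h3; omega
  have hcc := (Walk.cons_isCycle_iff p h).mp hc
  have hpath : p.IsPath := hcc.1
  have hnnr : ¬ p.reverse.Nil := by
    rw [Walk.nil_iff_length_eq, Walk.length_reverse]; omega
  obtain ⟨b', h'', q, hpr⟩ := (Walk.not_nil_iff).mp hnnr
  refine ⟨b, b', ?_, ?_, ?_, h, h''⟩
  · simp only [Walk.support_cons, List.mem_cons]
    exact Or.inr p.start_mem_support
  · have hb' : b' ∈ p.reverse.support := by
      rw [hpr]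
      simp only [Walk.support_cons, List.mem_cons]
      exact Or.inr q.start_mem_support
    rw [Walk.support_reverse, List.mem_reverse] at hb'
    simp only [Walk.support_cons, List.mem_cons]
    exact Or.inr hb'
  · rintro rfl
    have hrp : p.reverse.IsPath := hpath.reverse
    rw [hpr] at hrp
    have hq : q.IsPath := hrp.of_cons
    have hqnil : q = Walk.nil := Walk.isPath_iff_eq_nil.mp hq
    have : p.reverse.length = 1 := by rw [hpr, hqnil]; simp
    rw [Walk.length_reverse] at this; omega

lemma two_nbrs {v x : V} {w : G.Walk v v} (hw : w.IsCycle) (hx : x ∈ w.support) :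
    ∃ y z, y ∈ w.support ∧ z ∈ w.support ∧ y ≠ z ∧ G.Adj x y ∧ G.Adj x z := by
  classical
  have hrot := hw.rotate hx
  have hmem : ∀ a, a ∈ (w.rotate x hx).support → a ∈ w.support := by
    intro a hha
    rcases (Walk.mem_support_iff _).mp hha with rfl | hh
    · exact hx
    · exact (Walk.mem_support_iff _).mpr
        (Or.inr (((Walk.support_rotate w x hx).mem_iff).mp hh))
  obtain ⟨y, z, h1, h2, h3, h4, h5⟩ := two_nbrs_start hrot
  exact ⟨y, z, hmem y h1, hmem z h2, h3, h4, h5⟩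

lemma acyclic_of_potential (f : V → ℕ) (hinj : Function.Injective f)
    (hone : ∀ x y z, G.Adj x y → G.Adj x z → f y < f x → f z < f x → y = z) :
    G.IsAcyclic := by
  classical
  intro v w hw
  have hne : (w.support.toFinset : Finset V).Nonempty :=
    ⟨v, by simp [Walk.start_mem_support]⟩
  obtain ⟨x, hxmem, hxmax⟩ := Finset.exists_max_image w.support.toFinset f hne
  rw [List.mem_toFinset] at hxmem
  obtain ⟨y, z, hy, hz, hyz, hay, haz⟩ := two_nbrs hw hxmem
  have hyx : f y < f x := by
    rcases lt_or_eq_of_le (hxmax y (by simpa using hy)) with h | h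
    · exact h
    · exact absurd (hinj h) (fun hh => G.irrefl (hh ▸ hay))
  have hzx : f z < f x := by
    rcases lt_or_eq_of_le (hxmax z (by simpa using hz)) with h | h
    · exact h
    · exact absurd (hinj h) (fun hh => G.irrefl (hh ▸ haz))
  exact hyz (hone x y z hay haz hyx hzx)

end generic


section arith

lemma pv_eq_of {l p : ℕ} (h1 : 2^l ∣ p) (h2 : ¬ 2^(l+1) ∣ p) : padicValNat 2 p = l := by
  have hp : p ≠ 0 := by rintro rfl; exact h2 (dvd_zero _)
  rw [← Nat.factorization_def p Nat.prime_two]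
  have a1 : l ≤ p.factorization 2 :=
    (Nat.Prime.pow_dvd_iff_le_factorization Nat.prime_two hp).mp h1
  have a2 : ¬ (l+1 ≤ p.factorization 2) := fun hh =>
    h2 ((Nat.Prime.pow_dvd_iff_le_factorization Nat.prime_two hp).mpr hh)
  omega

lemma pv_odd {p : ℕ} (h : ¬ 2 ∣ p) : padicValNat 2 p = 0 :=
  pv_eq_of (one_dvd p) (by simpa using h)

lemma dvd_of_lt_pv {l p : ℕ} (h : l < padicValNat 2 p) : 2^(l+1) ∣ p :=
  dvd_trans (pow_dvd_pow 2 h) pow_padicValNat_dvd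

lemma pv_add_pow {l p : ℕ} (h : 2^(l+1) ∣ p) : padicValNat 2 (p + 2^l) = l := by
  refine pv_eq_of (Nat.dvd_add (dvd_trans (pow_dvd_pow 2 (Nat.le_succ l)) h) dvd_rfl) ?_
  intro hdvd
  have h2 : (2:ℕ)^(l+1) ∣ 2^l := (Nat.dvd_add_right h).mp hdvd
  have := Nat.le_of_dvd (Nat.pow_pos (a := 2) (n := l) (by norm_num)) h2
  have h3 : (2:ℕ)^l < 2^(l+1) := Nat.pow_lt_pow_succ (by norm_num)
  omega

lemma pv_unique_top {k p : ℕ} (hk : 1 ≤ k) (hp : 0 < p) (hle : p ≤ 2^k - 1)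
    (hpv : padicValNat 2 p = k-1) : p = 2^(k-1) := by
  have h1 : 2^(k-1) ∣ p := by
    rw [← hpv]; exact pow_padicValNat_dvd
  obtain ⟨m, hm⟩ := h1
  have hm1 : m ≠ 0 := by rintro rfl; omega
  have hk2 : 2^(k-1) * 2 = 2^k := by
    rw [← pow_succ]; congr 1; omega
  have hm2 : m = 1 := by
    by_contra hm2
    have : 2 ≤ m := by omega
    have : 2^(k-1) * 2 ≤ 2^(k-1) * m := Nat.mul_le_mul_left _ this
    have hpos : 0 < 2^k := Nat.pow_pos (a := 2) (n := k) (by norm_num)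
    omega
  rw [hm, hm2, mul_one]

end arith

variable {k : ℕ}

lemma gk_adj_ll {a b : Fin (2^k-1)} :
    (Gk k).Adj (Sum.inl a) (Sum.inl b) ↔ ((b:ℕ) = (a:ℕ) + 1 ∨ (a:ℕ) = (b:ℕ) + 1) := by
  simp only [Gk, fromRel_adj, ne_eq, Sum.inl.injEq]
  constructor
  · rintro ⟨h1, h2⟩; exact h2
  · intro h
    refine ⟨fun hh => ?_, h⟩
    subst hh
    omega

lemma gk_adj_lr {a : Fin (2^k-1)} {i : Fin k} :
    (Gk k).Adj (Sum.inl a) (Sum.inr i) ↔ padicValNat 2 ((a:ℕ)+1) = (i:ℕ) := by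
  simp [Gk, fromRel_adj]

lemma gk_adj_rl {a : Fin (2^k-1)} {i : Fin k} :
    (Gk k).Adj (Sum.inr i) (Sum.inl a) ↔ padicValNat 2 ((a:ℕ)+1) = (i:ℕ) := by
  simp [Gk, fromRel_adj]

lemma gk_adj_rr {i j : Fin k} : ¬ (Gk k).Adj (Sum.inr i) (Sum.inr j) := by
  simp [Gk, fromRel_adj]

section o2
variable {k : ℕ} {v : Fin (2^k-1) ⊕ Fin k} {w : (Gk k).Walk v v}

/-- closure: a low path vertex in a cycle avoiding low `inr`s has both path nbrs in the cycle -/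
lemma gk_closure {l : ℕ} (hw : w.IsCycle)
    (hv : ∀ i : Fin k, (i:ℕ) < l → Sum.inr i ∉ w.support)
    {a : Fin (2^k-1)} (ha : Sum.inl a ∈ w.support)
    (hlow : padicValNat 2 ((a:ℕ)+1) < l) :
    ∃ b c : Fin (2^k-1), Sum.inl b ∈ w.support ∧ Sum.inl c ∈ w.support ∧
      (b:ℕ)+1 = (a:ℕ) ∧ (c:ℕ) = (a:ℕ)+1 := by
  obtain ⟨y, z, hy, hz, hyz, hay, haz⟩ := two_nbrs hw ha
  have hcase : ∀ t : Fin (2^k-1) ⊕ Fin k, t ∈ w.support → (Gk k).Adj (Sum.inl a) t →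
      ∃ b : Fin (2^k-1), t = Sum.inl b ∧ ((b:ℕ) = (a:ℕ) + 1 ∨ (a:ℕ) = (b:ℕ) + 1) := by
    rintro (b | i) ht hadj
    · exact ⟨b, rfl, gk_adj_ll.mp hadj⟩
    · exfalso
      have := gk_adj_lr.mp hadj
      exact hv i (by omega) ht
  obtain ⟨by', rfl, hby⟩ := hcase y hy hay
  obtain ⟨bz, rfl, hbz⟩ := hcase z hz haz
  have hne : (by' : ℕ) ≠ (bz : ℕ) := fun hh => hyz (by rw [Fin.ext hh])
  rcases hby with h1 | h1 <;> rcases hbz with h2 | h2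
  · omega
  · exact ⟨bz, by', hz, hy, by omega, by omega⟩
  · exact ⟨by', bz, hy, hz, by omega, by omega⟩
  · omega

lemma gk_rightB {l : ℕ} (hw : w.IsCycle)
    (hv : ∀ i : Fin k, (i:ℕ) < l → Sum.inr i ∉ w.support)
    (hno : ∀ a : Fin (2^k-1), Sum.inl a ∈ w.support → padicValNat 2 ((a:ℕ)+1) ≠ l) :
    ∀ m : ℕ, ∀ a : Fin (2^k-1), 2^k - 1 - (a:ℕ) ≤ m → Sum.inl a ∈ w.support →
      ∃ b : Fin (2^k-1), Sum.inl b ∈ w.support ∧ (a:ℕ) ≤ (b:ℕ) ∧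
        l < padicValNat 2 ((b:ℕ)+1) ∧
        ∀ r : Fin (2^k-1), (a:ℕ) ≤ (r:ℕ) → (r:ℕ) ≤ (b:ℕ) → Sum.inl r ∈ w.support := by
  intro m
  induction m with
  | zero =>
    intro a hm _
    exfalso
    have := a.isLt
    omega
  | succ m ih =>
    intro a hm ha
    rcases Nat.lt_trichotomy (padicValNat 2 ((a:ℕ)+1)) l with hlt | heq | hgt
    · obtain ⟨b, c, _, hc, _, hc2⟩ := gk_closure hw hv ha hlt
      obtain ⟨b', hb'1, hb'2, hb'3, hb'4⟩ := ih c (by have := a.isLt; omega) hc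
      refine ⟨b', hb'1, by omega, hb'3, ?_⟩
      intro r h1 h2
      rcases Nat.eq_or_lt_of_le h1 with h1' | h1'
      · have : r = a := Fin.ext h1'.symm
        rw [this]; exact ha
      · exact hb'4 r (by omega) h2
    · exact absurd heq (hno a ha)
    · exact ⟨a, ha, le_rfl, hgt, fun r h1 h2 => by
        have : r = a := Fin.ext (le_antisymm h2 h1)
        rw [this]; exact ha⟩

lemma gk_leftB {l : ℕ} (hw : w.IsCycle)
    (hv : ∀ i : Fin k, (i:ℕ) < l → Sum.inr i ∉ w.support)
    (hno : ∀ a : Fin (2^k-1), Sum.inl a ∈ w.support → padicValNat 2 ((a:ℕ)+1) ≠ l) :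
    ∀ m : ℕ, ∀ a : Fin (2^k-1), (a:ℕ) ≤ m → Sum.inl a ∈ w.support →
      ∃ b : Fin (2^k-1), Sum.inl b ∈ w.support ∧ (b:ℕ) ≤ (a:ℕ) ∧
        l < padicValNat 2 ((b:ℕ)+1) ∧
        ∀ r : Fin (2^k-1), (b:ℕ) ≤ (r:ℕ) → (r:ℕ) ≤ (a:ℕ) → Sum.inl r ∈ w.support := by
  intro m
  induction m with
  | zero =>
    intro a hm ha
    rcases Nat.lt_trichotomy (padicValNat 2 ((a:ℕ)+1)) l with hlt | heq | hgt
    · obtain ⟨b, c, hb, _, hb2, _⟩ := gk_closure hw hv ha hlt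
      exfalso; omega
    · exact absurd heq (hno a ha)
    · exact ⟨a, ha, le_rfl, hgt, fun r h1 h2 => by
        have : r = a := Fin.ext (le_antisymm (by omega) h1)
        rw [this]; exact ha⟩
  | succ m ih =>
    intro a hm ha
    rcases Nat.lt_trichotomy (padicValNat 2 ((a:ℕ)+1)) l with hlt | heq | hgt
    · obtain ⟨b, c, hb, _, hb2, _⟩ := gk_closure hw hv ha hlt
      obtain ⟨b', hb'1, hb'2, hb'3, hb'4⟩ := ih b (by omega) hb
      refine ⟨b', hb'1, by omega, hb'3, ?_⟩
      intro r h1 h2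
      rcases Nat.eq_or_lt_of_le h2 with h2' | h2'
      · have : r = a := Fin.ext h2'
        rw [this]; exact ha
      · exact hb'4 r h1 (by omega)
    · exact absurd heq (hno a ha)
    · exact ⟨a, ha, le_rfl, hgt, fun r h1 h2 => by
        have : r = a := Fin.ext (le_antisymm h2 h1)
        rw [this]; exact ha⟩

/-- main structural lemma: a cycle avoiding `v_0, …, v_{l-1}` contains a path vertex
of 2-adic valuation exactly `l`. -/
lemma gk_exists_val_exact {l : ℕ} (hw : w.IsCycle)
    (hv : ∀ i : Fin k, (i:ℕ) < l → Sum.inr i ∉ w.support) :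
    ∃ a : Fin (2^k-1), Sum.inl a ∈ w.support ∧ padicValNat 2 ((a:ℕ)+1) = l := by
  by_contra hcon
  push_neg at hcon
  have hno : ∀ a : Fin (2^k-1), Sum.inl a ∈ w.support → padicValNat 2 ((a:ℕ)+1) ≠ l :=
    fun a ha => hcon a ha
  -- some path vertex in the support
  have gk_adj_to_inr : ∀ (x : Fin (2^k-1) ⊕ Fin k) (j : Fin k),
      (Gk k).Adj x (Sum.inr j) → ∃ a : Fin (2^k-1), x = Sum.inl a := by
    rintro (a | i) j hadj
    · exact ⟨a, rfl⟩
    · exact absurd hadj gk_adj_rr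
  have hexl : ∃ a : Fin (2^k-1), Sum.inl a ∈ w.support := by
    have hv0 : v ∈ w.support := w.start_mem_support
    obtain ⟨y, z, hy, _, hyz, hay, _⟩ := two_nbrs hw hv0
    rcases hy1 : y with a | j
    · exact ⟨a, hy1 ▸ hy⟩
    · obtain ⟨a', hva⟩ := gk_adj_to_inr v j (hy1 ▸ hay)
      exact ⟨a', hva ▸ hv0⟩
  obtain ⟨a, ha⟩ := hexl
  -- find a *low* path vertex (valuation < l), or directly conclude
  have hexlow : ∃ a : Fin (2^k-1), Sum.inl a ∈ w.support ∧ padicValNat 2 ((a:ℕ)+1) < l := by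
    rcases Nat.lt_trichotomy (padicValNat 2 ((a:ℕ)+1)) l with hlt | heq | hgt
    · exact ⟨a, ha, hlt⟩
    · exact absurd heq (hno a ha)
    · -- high vertex: one of its two distinct nbrs is a path vertex with odd position
      obtain ⟨y, z, hy, hz, hyz, hay, haz⟩ := two_nbrs hw ha
      have hnb : ∃ b : Fin (2^k-1), Sum.inl b ∈ w.support ∧
          ((b:ℕ) = (a:ℕ) + 1 ∨ (a:ℕ) = (b:ℕ) + 1) := by
        rcases hy1 : y with b | i
        · exact ⟨b, hy1 ▸ hy, gk_adj_ll.mp (hy1 ▸ hay)⟩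
        · rcases hz1 : z with b | j
          · exact ⟨b, hz1 ▸ hz, gk_adj_ll.mp (hz1 ▸ haz)⟩
          · exfalso
            have e1 := gk_adj_lr.mp (hy1 ▸ hay)
            have e2 := gk_adj_lr.mp (hz1 ▸ haz)
            apply hyz
            rw [hy1, hz1]
            congr 1
            exact Fin.ext (by omega)
      obtain ⟨b, hb, hab⟩ := hnb
      have hdvd : 2 ∣ ((a:ℕ)+1) := by
        have h2 := dvd_of_lt_pv (l := 0) (p := (a:ℕ)+1) (by omega)
        simpa using h2
      have hodd : ¬ 2 ∣ ((b:ℕ)+1) := by rcases hab with h|h <;> omega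
      have hpvb : padicValNat 2 ((b:ℕ)+1) = 0 := pv_odd hodd
      have hl0 : l ≠ 0 := fun hh => hno b hb (by omega)
      exact ⟨b, hb, by omega⟩
  obtain ⟨a0, ha0, ha0low⟩ := hexlow
  obtain ⟨bR, hbR, hbR1, hbR2, hbR3⟩ :=
    gk_rightB hw hv hno (2^k - 1 - (a0:ℕ)) a0 le_rfl ha0
  obtain ⟨bL, hbL, hbL1, hbL2, hbL3⟩ :=
    gk_leftB hw hv hno (a0:ℕ) a0 le_rfl ha0
  have hLlt : (bL:ℕ) < (a0:ℕ) := by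
    rcases Nat.eq_or_lt_of_le hbL1 with h | h
    · exfalso; rw [h] at hbL2; omega
    · exact h
  have hRlt : (a0:ℕ) < (bR:ℕ) := by
    rcases Nat.eq_or_lt_of_le hbR1 with h | h
    · exfalso; rw [← h] at hbR2; omega
    · exact h
  -- positions
  have hdL : 2^(l+1) ∣ ((bL:ℕ)+1) := dvd_of_lt_pv hbL2
  have hdR : 2^(l+1) ∣ ((bR:ℕ)+1) := dvd_of_lt_pv hbR2
  have hgap : (bL:ℕ)+1 + 2^(l+1) ≤ (bR:ℕ)+1 := by
    have hd : 2^(l+1) ∣ ((bR:ℕ)+1) - ((bL:ℕ)+1) := Nat.dvd_sub hdR hdL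
    have hpos : 0 < ((bR:ℕ)+1) - ((bL:ℕ)+1) := by omega
    have := Nat.le_of_dvd hpos hd
    omega
  have hq : padicValNat 2 (((bL:ℕ)+1) + 2^l) = l := pv_add_pow hdL
  have hlt2 : (2:ℕ)^l < 2^(l+1) := Nat.pow_lt_pow_succ (by norm_num)
  have hpow : 0 < (2:ℕ)^l := Nat.pow_pos (a := 2) (n := l) (by norm_num)
  -- the Fin vertex at position (bL+1) + 2^l
  have hrangetop : (bL:ℕ) + 2^l < 2^k - 1 := by
    have := bR.isLt
    omega
  set r : Fin (2^k-1) := ⟨(bL:ℕ) + 2^l, hrangetop⟩ with hr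
  have hrsup : Sum.inl r ∈ w.support := by
    rcases Nat.le_total ((r:ℕ)) ((a0:ℕ)) with h | h
    · exact hbL3 r (by show (bL:ℕ) ≤ (bL:ℕ) + 2^l; omega) h
    · exact hbR3 r h (by show (bL:ℕ) + 2^l ≤ (bR:ℕ); omega)
  refine hno r hrsup ?_
  show padicValNat 2 ((bL:ℕ) + 2^l + 1) = l
  rw [show (bL:ℕ) + 2^l + 1 = ((bL:ℕ)+1) + 2^l by omega]
  exact hq

end o2

section main
variable {k : ℕ}

lemma gk_cycle_has_inr {v : Fin (2^k-1) ⊕ Fin k} {w : (Gk k).Walk v v}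
    (hw : w.IsCycle) : ∃ i : Fin k, Sum.inr i ∈ w.support := by
  haveI : DecidablePred (fun a : Fin (2^k-1) => Sum.inl a ∈ w.support) :=
    fun _ => Classical.propDecidable _
  by_contra hcon
  push_neg at hcon
  -- the set of path vertices in the support
  have hTne : ((Finset.univ.filter
      (fun a : Fin (2^k-1) => Sum.inl a ∈ w.support)) : Finset (Fin (2^k-1))).Nonempty := by
    have gk_adj_to_inr : ∀ (x : Fin (2^k-1) ⊕ Fin k) (j : Fin k),
        (Gk k).Adj x (Sum.inr j) → ∃ a : Fin (2^k-1), x = Sum.inl a := by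
      rintro (a | i) j hadj
      · exact ⟨a, rfl⟩
      · exact absurd hadj gk_adj_rr
    have hv0 : v ∈ w.support := w.start_mem_support
    obtain ⟨y, z, hy, _, hyz, hay, _⟩ := two_nbrs hw hv0
    rcases hy1 : y with a | j
    · exact ⟨a, by simp [hy1 ▸ hy]⟩
    · obtain ⟨a', hva⟩ := gk_adj_to_inr v j (hy1 ▸ hay)
      refine ⟨a', Finset.mem_filter.mpr ⟨Finset.mem_univ _, ?_⟩⟩
      rw [← hva]; exact hv0
  obtain ⟨a, hamem, hamax⟩ := Finset.exists_max_image _ (fun a : Fin (2^k-1) => (a:ℕ)) hTne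
  rw [Finset.mem_filter] at hamem
  obtain ⟨y, z, hy, hz, hyz, hay, haz⟩ := two_nbrs hw hamem.2
  have hcase : ∀ t, t ∈ w.support → (Gk k).Adj (Sum.inl a) t →
      ∃ b : Fin (2^k-1), t = Sum.inl b ∧ (a:ℕ) = (b:ℕ) + 1 := by
    rintro (b | i) ht hadj
    · refine ⟨b, rfl, ?_⟩
      have hle : (b:ℕ) ≤ (a:ℕ) := hamax b (by simp [ht])
      rcases gk_adj_ll.mp hadj with h | h <;> omega
    · exact absurd ht (hcon i)
  obtain ⟨by', rfl, h1⟩ := hcase y hy hay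
  obtain ⟨bz, rfl, h2⟩ := hcase z hz haz
  exact hyz (by rw [Fin.ext (show (by':ℕ) = (bz:ℕ) by omega)])

theorem gk_okfree (k : ℕ) : OkFree (Gk k) 2 := by
  rintro ⟨b, w, hcyc, hind⟩
  have key : ∀ l : ℕ, ∀ i : Fin k, (i:ℕ) < l →
      (Sum.inr i ∉ (w 0).support ∧ Sum.inr i ∉ (w 1).support) := by
    intro l
    induction l with
    | zero => intro i hi; omega
    | succ l ih =>
      intro i hi
      rcases Nat.lt_or_ge (i:ℕ) l with h | h
      · exact ih i h
      have hil : (i:ℕ) = l := by omega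
      obtain ⟨a0, ha0, hpv0⟩ := gk_exists_val_exact (hcyc 0) (fun j hj => (ih j hj).1)
      obtain ⟨a1, ha1, hpv1⟩ := gk_exists_val_exact (hcyc 1) (fun j hj => (ih j hj).2)
      constructor
      · intro hmem
        exact (hind 0 1 (by decide) _ hmem _ ha1).2 (gk_adj_rl.mpr (by omega))
      · intro hmem
        exact (hind 1 0 (by decide) _ hmem _ ha0).2 (gk_adj_rl.mpr (by omega))
  obtain ⟨i, hi⟩ := gk_cycle_has_inr (hcyc 0)
  exact (key k i i.isLt).1 hi

end main

section k23
variable {k : ℕ}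

lemma gk_no3 (x y z₁ z₂ z₃ : Fin (2^k-1) ⊕ Fin k) (hxy : x ≠ y)
    (h12 : z₁ ≠ z₂) (h13 : z₁ ≠ z₃) (h23 : z₂ ≠ z₃)
    (a1 : (Gk k).Adj x z₁) (b1 : (Gk k).Adj y z₁)
    (a2 : (Gk k).Adj x z₂) (b2 : (Gk k).Adj y z₂)
    (a3 : (Gk k).Adj x z₃) (b3 : (Gk k).Adj y z₃) : False := by
  have finl : ∀ m m' : Fin (2^k-1), (m:ℕ) = (m':ℕ) →
      (Sum.inl m : Fin (2^k-1) ⊕ Fin k) = Sum.inl m' := by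
    intro m m' h; rw [Fin.ext h]
  have finr : ∀ i i' : Fin k, (i:ℕ) = (i':ℕ) →
      (Sum.inr i : Fin (2^k-1) ⊕ Fin k) = Sum.inr i' := by
    intro i i' h; rw [Fin.ext h]
  -- case on shapes of x and y, exploiting symmetry x ↔ y is not needed: do all 4
  rcases x with a | i <;> rcases y with a' | i'
  · -- inl a, inl a'
    have haa : (a:ℕ) ≠ (a':ℕ) := fun h => hxy (finl a a' h)
    -- each z is inl m with constraints, or inr j with pv equal
    have hz : ∀ z : Fin (2^k-1) ⊕ Fin k, (Gk k).Adj (Sum.inl a) z → (Gk k).Adj (Sum.inl a') z →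
        (∃ m : Fin (2^k-1), z = Sum.inl m ∧
          ((m:ℕ) = (a:ℕ) + 1 ∨ (a:ℕ) = (m:ℕ) + 1) ∧
          ((m:ℕ) = (a':ℕ) + 1 ∨ (a':ℕ) = (m:ℕ) + 1)) ∨
        (∃ j : Fin k, z = Sum.inr j ∧ padicValNat 2 ((a:ℕ)+1) = (j:ℕ) ∧
          padicValNat 2 ((a':ℕ)+1) = (j:ℕ)) := by
      rintro (m | j) h1 h2
      · exact Or.inl ⟨m, rfl, gk_adj_ll.mp h1, gk_adj_ll.mp h2⟩
      · exact Or.inr ⟨j, rfl, gk_adj_lr.mp h1, gk_adj_lr.mp h2⟩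
    -- at most one inr (both give same j) and at most one inl
    have key : ∀ z z' : Fin (2^k-1) ⊕ Fin k, z ≠ z' →
        (Gk k).Adj (Sum.inl a) z → (Gk k).Adj (Sum.inl a') z →
        (Gk k).Adj (Sum.inl a) z' → (Gk k).Adj (Sum.inl a') z' →
        ((∃ m, z = Sum.inl m) ↔ ¬ ∃ m, z' = Sum.inl m) := by
      intro z z' hne hz1 hz2 hz3 hz4
      rcases hz z hz1 hz2 with ⟨m, rfl, hm1, hm2⟩ | ⟨j, rfl, hj1, hj2⟩ <;>
        rcases hz z' hz3 hz4 with ⟨m', rfl, hm1', hm2'⟩ | ⟨j', rfl, hj1', hj2'⟩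
      · exfalso
        apply hne
        apply finl
        rcases hm1 with h|h <;> rcases hm2 with g|g <;>
          rcases hm1' with h'|h' <;> rcases hm2' with g'|g' <;> omega
      · simp
      · simp
      · exfalso
        exact hne (finr j j' (by omega))
    -- three z's: pigeonhole on inl-ness
    by_cases c1 : ∃ m, z₁ = Sum.inl m <;> by_cases c2 : ∃ m, z₂ = Sum.inl m <;>
      by_cases c3 : ∃ m, z₃ = Sum.inl m
    · exact ((key z₁ z₂ h12 a1 b1 a2 b2).mp c1) c2
    · exact ((key z₁ z₂ h12 a1 b1 a2 b2).mp c1) c2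
    · exact ((key z₁ z₃ h13 a1 b1 a3 b3).mp c1) c3
    · exact c2 ((key z₂ z₃ h23 a2 b2 a3 b3).mpr c3)
    · exact ((key z₂ z₃ h23 a2 b2 a3 b3).mp c2) c3
    · exact c1 ((key z₁ z₃ h13 a1 b1 a3 b3).mpr c3)
    · exact c1 ((key z₁ z₂ h12 a1 b1 a2 b2).mpr c2)
    · exact c1 ((key z₁ z₂ h12 a1 b1 a2 b2).mpr c2)
  · -- x = inl a, y = inr i' : common nbrs are inl m with m = a ± 1
    have hz : ∀ z : Fin (2^k-1) ⊕ Fin k, (Gk k).Adj (Sum.inl a) z → (Gk k).Adj (Sum.inr i') z →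
        ∃ m : Fin (2^k-1), z = Sum.inl m ∧ ((m:ℕ) = (a:ℕ) + 1 ∨ (a:ℕ) = (m:ℕ) + 1) := by
      rintro (m | j) h1 h2
      · exact ⟨m, rfl, gk_adj_ll.mp h1⟩
      · exact absurd h2 gk_adj_rr
    obtain ⟨m1, rfl, hm1⟩ := hz z₁ a1 b1
    obtain ⟨m2, rfl, hm2⟩ := hz z₂ a2 b2
    obtain ⟨m3, rfl, hm3⟩ := hz z₃ a3 b3
    have d12 : (m1:ℕ) ≠ (m2:ℕ) := fun h => h12 (finl _ _ h)
    have d13 : (m1:ℕ) ≠ (m3:ℕ) := fun h => h13 (finl _ _ h)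
    have d23 : (m2:ℕ) ≠ (m3:ℕ) := fun h => h23 (finl _ _ h)
    rcases hm1 with h|h <;> rcases hm2 with g|g <;> rcases hm3 with f|f <;> omega
  · -- x = inr i, y = inl a' : symmetric
    have hz : ∀ z : Fin (2^k-1) ⊕ Fin k, (Gk k).Adj (Sum.inr i) z → (Gk k).Adj (Sum.inl a') z →
        ∃ m : Fin (2^k-1), z = Sum.inl m ∧ ((m:ℕ) = (a':ℕ) + 1 ∨ (a':ℕ) = (m:ℕ) + 1) := by
      rintro (m | j) h1 h2
      · exact ⟨m, rfl, gk_adj_ll.mp h2⟩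
      · exact absurd h1 gk_adj_rr
    obtain ⟨m1, rfl, hm1⟩ := hz z₁ a1 b1
    obtain ⟨m2, rfl, hm2⟩ := hz z₂ a2 b2
    obtain ⟨m3, rfl, hm3⟩ := hz z₃ a3 b3
    have d12 : (m1:ℕ) ≠ (m2:ℕ) := fun h => h12 (finl _ _ h)
    have d13 : (m1:ℕ) ≠ (m3:ℕ) := fun h => h13 (finl _ _ h)
    have d23 : (m2:ℕ) ≠ (m3:ℕ) := fun h => h23 (finl _ _ h)
    rcases hm1 with h|h <;> rcases hm2 with g|g <;> rcases hm3 with f|f <;> omega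
  · -- inr i, inr i' : no common neighbors at all
    have : ∀ z : Fin (2^k-1) ⊕ Fin k, (Gk k).Adj (Sum.inr i) z → (Gk k).Adj (Sum.inr i') z →
        False := by
      rintro (m | j) h1 h2
      · have e1 := gk_adj_rl.mp h1
        have e2 := gk_adj_rl.mp h2
        exact hxy (finr i i' (by omega))
      · exact gk_adj_rr h1
    exact this z₁ a1 b1

theorem gk_no_k23 (k : ℕ) : ¬ ContainsKst (Gk k) 2 3 := by
  rintro ⟨A, B, hdisj, hA, hB, hadj⟩
  obtain ⟨x, y, hxy, rfl⟩ := Finset.card_eq_two.mp hA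
  obtain ⟨z₁, z₂, z₃, h12, h13, h23, rfl⟩ := Finset.card_eq_three.mp hB
  have m1 : z₁ ∈ ({z₁, z₂, z₃} : Finset _) := by simp
  have m2 : z₂ ∈ ({z₁, z₂, z₃} : Finset _) := by simp
  have m3 : z₃ ∈ ({z₁, z₂, z₃} : Finset _) := by simp
  have mx : x ∈ ({x, y} : Finset _) := by simp
  have my : y ∈ ({x, y} : Finset _) := by simp
  exact gk_no3 x y z₁ z₂ z₃ hxy h12 h13 h23
    (hadj x mx z₁ m1) (hadj y my z₁ m1) (hadj x mx z₂ m2) (hadj y my z₂ m2)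
    (hadj x mx z₃ m3) (hadj y my z₃ m3)
end k23

section fvs
variable {k : ℕ}

def pot {k : ℕ} : (Fin (2 ^ k - 1) ⊕ Fin k) → ℕ
  | Sum.inl a => (a : ℕ)
  | Sum.inr _ => 2^k

@[simp] lemma pot_inl {a : Fin (2^k-1)} : pot (Sum.inl a : Fin (2 ^ k - 1) ⊕ Fin k) = (a:ℕ) := rfl
@[simp] lemma pot_inr {i : Fin k} : pot (Sum.inr i : Fin (2 ^ k - 1) ⊕ Fin k) = 2^k := rfl

theorem gk_fvs (k : ℕ) (hk : 1 ≤ k) :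
    ∃ X : Finset (Fin (2 ^ k - 1) ⊕ Fin k),
      IsFVS (Gk k) ↑X ∧ X.card ≤ k - 1 := by
  classical
  refine ⟨(Finset.univ.filter (fun i : Fin k => (i:ℕ) < k - 1)).image Sum.inr, ?_, ?_⟩
  · -- acyclicity of the induced graph
    unfold IsFVS
    set S : Set (Fin (2 ^ k - 1) ⊕ Fin k) :=
      {v | v ∉ ((Finset.univ.filter (fun i : Fin k => (i:ℕ) < k - 1)).image Sum.inr : Finset _)}
      with hS
    -- potential function
    have hmem : ∀ i : Fin k, (Sum.inr i : Fin (2 ^ k - 1) ⊕ Fin k) ∈ S → (i:ℕ) = k - 1 := by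
      intro i hi
      by_contra hne
      have hilt : (i:ℕ) < k - 1 := by have := i.isLt; omega
      exact hi (Finset.mem_image_of_mem _ (by simp [hilt]))
    apply acyclic_of_potential (f := fun v : S => pot (v : Fin (2 ^ k - 1) ⊕ Fin k))
    · rintro ⟨x, hx⟩ ⟨y, hy⟩ hf
      rcases x with a | i <;> rcases y with b | j
      · simp only [pot_inl] at hf
        have : a = b := Fin.ext hf
        simp [this]
      · exfalso
        simp only [pot_inl, pot_inr] at hf
        have := a.isLt
        omega
      · exfalso
        simp only [pot_inl, pot_inr] at hf
        have := b.isLt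
        omega
      · have : i = j := Fin.ext (by have := hmem i hx; have := hmem j hy; omega)
        simp [this]
    · rintro ⟨x, hx⟩ ⟨y, hy⟩ ⟨z, hz⟩ hxy hxz hfy hfz
      have hxy' : (Gk k).Adj x y := hxy
      have hxz' : (Gk k).Adj x z := hxz
      rcases x with a | i
      · -- path vertex: smaller neighbours are inl with val + 1 = a
        have hcase : ∀ t, (Gk k).Adj (Sum.inl a) t → pot t < pot (Sum.inl a) →
            ∃ c : Fin (2^k-1), t = Sum.inl c ∧ (c:ℕ) + 1 = (a:ℕ) := by
          rintro (c | j) hadj hlt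
          · simp only [pot_inl] at hlt
            rcases gk_adj_ll.mp hadj with h | h
            · omega
            · exact ⟨c, rfl, by omega⟩
          · exfalso
            simp only [pot_inl, pot_inr] at hlt
            have := a.isLt
            omega
        obtain ⟨c₁, rfl, e₁⟩ := hcase y hxy' hfy
        obtain ⟨c₂, rfl, e₂⟩ := hcase z hxz' hfz
        have : c₁ = c₂ := Fin.ext (by omega)
        simp [this]
      · -- the top special vertex: unique neighbour
        have hik := hmem i hx
        have hcase : ∀ t, (Gk k).Adj (Sum.inr i) t →
            ∃ c : Fin (2^k-1), t = Sum.inl c ∧ (c:ℕ) + 1 = 2^(k-1) := by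
          rintro (c | j) hadj
          · have hpv := gk_adj_rl.mp hadj
            have hc := c.isLt
            have := pv_unique_top hk (p := (c:ℕ)+1) (by omega) (by omega) (by omega)
            exact ⟨c, rfl, this⟩
          · exact absurd hadj gk_adj_rr
        obtain ⟨c₁, rfl, e₁⟩ := hcase y hxy'
        obtain ⟨c₂, rfl, e₂⟩ := hcase z hxz'
        have : c₁ = c₂ := Fin.ext (by omega)
        simp [this]
  · -- cardinality
    rw [Finset.card_image_of_injective _ Sum.inr_injective]
    have : (Finset.univ.filter (fun i : Fin k => (i:ℕ) < k - 1)).card ≤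
        (Finset.range (k-1)).card := by
      refine Finset.card_le_card_of_injOn (fun i => (i:ℕ)) ?_ ?_
      · intro i hi
        rw [Finset.mem_coe, Finset.mem_filter] at hi
        simp [hi.2]
      · intro i _ j _ h
        exact Fin.ext h
    simpa using this
end fvs

end gkproofs

/-- For every `k ≥ 1`, the graph `G_k` is `O_2`-free, contains no
`K_{2,3}` subgraph, and has a feedback vertex set of size at most `k - 1`. -/
theorem stmt1 (k : ℕ) (hk : 1 ≤ k) :
    OkFree (Gk k) 2 ∧ ¬ ContainsKst (Gk k) 2 3 ∧
      ∃ X : Finset (Fin (2 ^ k - 1) ⊕ Fin k),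
        IsFVS (Gk k) ↑X ∧ X.card ≤ k - 1 := by
  exact ⟨gk_okfree k, gk_no_k23 k, gk_fvs k hk⟩
end

section
/- For every integer k ≥ 1, the graph G_k contains K_{k+1} as a minor: there exist k+1 pairwise disjoint nonempty subsets of the vertex set of G_k, each inducing a connected subgraph of G_k, such that for any two of these subsets there is an edge of G_k joining a vertex of one to a vertex of the other. -/
open SimpleGraph

lemma Gk_adj_path {k : ℕ} (p q : Fin (2^k-1)) (h : (q:ℕ) = (p:ℕ)+1) :
    (Gk k).Adj (Sum.inl p) (Sum.inl q) := by
  rw [Gk, SimpleGraph.fromRel_adj]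
  refine ⟨fun hc => ?_, Or.inl h⟩
  rw [Sum.inl.injEq] at hc
  subst hc; omega

lemma Gk_adj_vp {k : ℕ} (p : Fin (2^k-1)) (i : Fin k)
    (h : padicValNat 2 ((p:ℕ)+1) = (i:ℕ)) :
    (Gk k).Adj (Sum.inl p) (Sum.inr i) := by
  rw [Gk, SimpleGraph.fromRel_adj]
  exact ⟨by simp, Or.inl h⟩

lemma v2_mul_odd (s c : ℕ) (hc : Odd c) : padicValNat 2 (2^s * c) = s := by
  have hc0 : c ≠ 0 := by rintro rfl; simp at hc
  have h2 : ¬ (2 ∣ c) := by rw [Nat.two_dvd_ne_zero, Nat.odd_iff.mp hc]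
  rw [padicValNat.mul (by positivity) hc0, padicValNat.prime_pow,
    padicValNat.eq_zero_of_not_dvd h2]
  omega

def blkF (K m : ℕ) : ℕ := if m < 3 * 2^K then Nat.log 2 m else K + 2

lemma blkF_eq_iff_le {K t : ℕ} (ht : t ≤ K) {m : ℕ} (hm : 1 ≤ m) :
    blkF K m = t ↔ (2^t ≤ m ∧ m < 2^(t+1)) := by
  have h1 : (2:ℕ)^(t+1) ≤ 2^(K+1) := Nat.pow_le_pow_right (by norm_num) (by omega)
  have h2 : (2:ℕ)^(K+1) = 2*2^K := by ring
  have h3 : (0:ℕ) < 2^K := Nat.pow_pos (by norm_num)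
  unfold blkF
  split_ifs with h
  · constructor
    · rintro rfl
      exact ⟨Nat.pow_log_le_self 2 (by omega), Nat.lt_pow_succ_log_self (by norm_num) m⟩
    · rintro ⟨ha, hb⟩; exact Nat.log_eq_of_pow_le_of_lt_pow ha hb
  · omega

lemma blkF_eq_iff_K1 {K m : ℕ} (hm : 1 ≤ m) :
    blkF K m = K+1 ↔ (2^(K+1) ≤ m ∧ m < 3*2^K) := by
  have h2 : (2:ℕ)^(K+1) = 2*2^K := by ring
  have h3 : (0:ℕ) < 2^K := Nat.pow_pos (by norm_num)
  unfold blkF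
  split_ifs with h
  · constructor
    · rintro hL
      have := Nat.pow_log_le_self 2 (show m ≠ 0 by omega)
      rw [hL] at this
      exact ⟨this, h⟩
    · rintro ⟨ha, hb⟩
      exact Nat.log_eq_of_pow_le_of_lt_pow ha (by omega)
  · omega

lemma blkF_eq_iff_K2 {K m : ℕ} (hm : 1 ≤ m) (hN : m ≤ 2^(K+2)-1) :
    blkF K m = K+2 ↔ 3*2^K ≤ m := by
  have h4 : (2:ℕ)^(K+2) = 4*2^K := by ring
  have h3 : (0:ℕ) < 2^K := Nat.pow_pos (by norm_num)
  clear hN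
  unfold blkF
  split_ifs with h
  · constructor
    · rintro hL
      have := Nat.pow_log_le_self 2 (show m ≠ 0 by omega)
      rw [hL] at this
      omega
    · omega
  · omega

lemma reach_chain (k : ℕ) (S : Set (Fin (2^k-1) ⊕ Fin k)) (a : ℕ) :
    ∀ b (hab : a ≤ b) (hb : b < 2^k-1)
    (hmem : ∀ m, a ≤ m → m ≤ b → ∀ (hm : m < 2^k-1), Sum.inl (⟨m, hm⟩ : Fin (2^k-1)) ∈ S),
    ((Gk k).induce S).Reachable
      ⟨Sum.inl ⟨a, lt_of_le_of_lt (by omega) hb⟩, hmem a le_rfl (by omega) _⟩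
      ⟨Sum.inl ⟨b, hb⟩, hmem b (by omega) le_rfl _⟩ := by
  intro b hab
  induction b, hab using Nat.le_induction with
  | base => intro hb hmem; exact SimpleGraph.Reachable.refl _
  | succ b hab ih =>
    intro hb hmem
    have hb' : b < 2^k-1 := by omega
    have r1 := ih hb' (fun m h1 h2 hm => hmem m h1 (by omega) hm)
    refine r1.trans (SimpleGraph.Adj.reachable ?_)
    exact Gk_adj_path (⟨b, hb'⟩ : Fin (2^k-1)) ⟨b+1, hb⟩ rfl

def GkF (K : ℕ) : Fin (2^(K+2) - 1) ⊕ Fin (K+2) → ℕ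
  | Sum.inl p => blkF K ((p:ℕ)+1)
  | Sum.inr i => (i:ℕ)

lemma pair_v (K s t : ℕ) (hs : s < K+2) (m : ℕ) (hm1 : 1 ≤ m) (hmN : m ≤ 2^(K+2)-1)
    (hv : padicValNat 2 m = s) (hblk : blkF K m = t) :
    ∃ a ∈ Finset.univ.filter (fun x => GkF K x = s),
      ∃ b ∈ Finset.univ.filter (fun x => GkF K x = t), (Gk (K+2)).Adj a b := by
  refine ⟨Sum.inr ⟨s, hs⟩, ?_, Sum.inl ⟨m-1, by omega⟩, ?_, ?_⟩
  · simp only [Finset.mem_filter, Finset.mem_univ, true_and]; simp [GkF]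
  · simp only [Finset.mem_filter, Finset.mem_univ, true_and]; simp only [GkF]
    rw [show (m-1)+1 = m by omega]
    exact hblk
  · refine (Gk_adj_vp _ _ ?_).symm
    show padicValNat 2 ((m-1)+1) = s
    rw [show (m-1)+1 = m by omega]
    exact hv

lemma pair_p (K : ℕ) (m : ℕ) (hm1 : 1 ≤ m) (hmN : m+1 ≤ 2^(K+2)-1) (s t : ℕ)
    (hi : blkF K m = s) (hj : blkF K (m+1) = t) :
    ∃ a ∈ Finset.univ.filter (fun x => GkF K x = s),
      ∃ b ∈ Finset.univ.filter (fun x => GkF K x = t), (Gk (K+2)).Adj a b := by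
  refine ⟨Sum.inl ⟨m-1, by omega⟩, ?_, Sum.inl ⟨m, by omega⟩, ?_, ?_⟩
  · simp only [Finset.mem_filter, Finset.mem_univ, true_and]; simp only [GkF]
    rw [show (m-1)+1 = m by omega]
    exact hi
  · simp only [Finset.mem_filter, Finset.mem_univ, true_and]; simp only [GkF]
    exact hj
  · refine Gk_adj_path _ _ ?_
    show m = (m-1)+1
    omega

/-- For every `k ≥ 1`, the graph `G_k` contains `K_{k+1}` as a minor:
there are `k+1` pairwise disjoint nonempty vertex subsets, each inducing a connected
subgraph, with an edge of `G_k` between any two of them. -/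
theorem stmt2 (k : ℕ) (hk : 1 ≤ k) :
    ∃ A : Fin (k + 1) → Finset (Fin (2 ^ k - 1) ⊕ Fin k),
      (∀ i, (A i).Nonempty) ∧
      (∀ i j, i ≠ j → Disjoint (A i) (A j)) ∧
      (∀ i, ((Gk k).induce (↑(A i) : Set (Fin (2 ^ k - 1) ⊕ Fin k))).Connected) ∧
      (∀ i j, i ≠ j → ∃ a ∈ A i, ∃ b ∈ A j, (Gk k).Adj a b) := by
  have hconn1 : ∀ (k' : ℕ) (x : Fin (2^k'-1) ⊕ Fin k'),
      ((Gk k').induce (↑({x} : Finset _) : Set _)).Connected := by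
    intro k' x
    rw [SimpleGraph.connected_iff_exists_forall_reachable]
    refine ⟨⟨x, by simp⟩, ?_⟩
    rintro ⟨w, hw⟩
    simp only [Finset.coe_singleton, Set.mem_singleton_iff] at hw
    subst hw
    exact SimpleGraph.Reachable.refl _
  rcases Nat.lt_or_ge k 2 with hk2 | hk2
  · -- k = 1
    obtain rfl : k = 1 := by omega
    have h0 : (0:ℕ) < 2^1 - 1 := by norm_num
    have hadj : (Gk 1).Adj (Sum.inl ⟨0, h0⟩) (Sum.inr 0) := by
      refine Gk_adj_vp _ _ ?_
      simp [padicValNat.one]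
    refine ⟨fun t => {![Sum.inr 0, Sum.inl ⟨0, h0⟩] t}, ?_, ?_, ?_, ?_⟩
    · intro i; exact ⟨_, Finset.mem_singleton_self _⟩
    · intro i j hij
      rw [Finset.disjoint_singleton]
      fin_cases i <;> fin_cases j <;> simp_all
    · intro i; exact hconn1 1 _
    · intro i j hij
      refine ⟨_, Finset.mem_singleton_self _, _, Finset.mem_singleton_self _, ?_⟩
      fin_cases i <;> fin_cases j
      · exact absurd rfl hij
      · exact hadj.symm
      · exact hadj
      · exact absurd rfl hij
  · obtain ⟨K, rfl⟩ : ∃ K, k = K + 2 := ⟨k-2, by omega⟩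
    have h3 : (0:ℕ) < 2^K := Nat.pow_pos (by norm_num)
    have e1 : (2:ℕ)^(K+1) = 2*2^K := by ring
    have e2 : (2:ℕ)^(K+2) = 4*2^K := by ring
    refine ⟨fun t => Finset.univ.filter (fun x => GkF K x = (t:ℕ)), ?_, ?_, ?_, ?_⟩
    · -- nonempty
      intro t
      rcases Nat.lt_or_ge (t:ℕ) (K+2) with ht | ht
      · exact ⟨Sum.inr ⟨(t:ℕ), ht⟩, by simp only [Finset.mem_filter, Finset.mem_univ, true_and]; simp [GkF]⟩
      · have ht' : (t:ℕ) = K+2 := by have := t.isLt; omega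
        refine ⟨Sum.inl ⟨3*2^K - 1, by omega⟩, ?_⟩
        simp only [Finset.mem_filter, Finset.mem_univ, true_and]; simp only [GkF]
        rw [show (3*2^K-1)+1 = 3*2^K by omega, ht']
        exact (blkF_eq_iff_K2 (by omega) (by omega)).mpr le_rfl
    · -- disjoint
      intro i j hij
      rw [Finset.disjoint_left]
      intro x hx hx'
      simp only [Finset.mem_filter, Finset.mem_univ, true_and] at hx hx'
      exact hij (Fin.ext (by omega))
    · -- connected
      intro t
      have htlt : (t:ℕ) < K+3 := t.isLt
      obtain ⟨L, hL1, hLN, hblkL, hIv, hLlow, hvL⟩ :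
          ∃ L, 1 ≤ L ∧ L ≤ 2^(K+2)-1 ∧ blkF K L = (t:ℕ) ∧
            (∀ m m', 1 ≤ m' → m' ≤ m → m ≤ 2^(K+2)-1 → blkF K m = (t:ℕ) → L ≤ m' →
              blkF K m' = (t:ℕ)) ∧
            (∀ m, 1 ≤ m → m ≤ 2^(K+2)-1 → blkF K m = (t:ℕ) → L ≤ m) ∧
            ((t:ℕ) ≤ K+1 → padicValNat 2 L = (t:ℕ)) := by
        rcases Nat.lt_or_ge (t:ℕ) (K+1) with ht | ht
        · -- t ≤ K
          have ht' : (t:ℕ) ≤ K := by omega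
          have hb1 : (2:ℕ)^(t:ℕ) ≤ 2^K := Nat.pow_le_pow_right (by norm_num) ht'
          have hb2 : (2:ℕ)^((t:ℕ)+1) ≤ 2^(K+1) := Nat.pow_le_pow_right (by norm_num) (by omega)
          have hb3 : (0:ℕ) < 2^(t:ℕ) := Nat.pow_pos (by norm_num)
          refine ⟨2^(t:ℕ), by omega, by omega,
            (blkF_eq_iff_le ht' (by omega)).mpr
              ⟨le_rfl, Nat.pow_lt_pow_right (by norm_num) (by omega)⟩,
            ?_, ?_, fun _ => padicValNat.prime_pow _⟩
          · intro m m' h1 h2 h3' hm hLm'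
            rw [blkF_eq_iff_le ht' (by omega)] at hm ⊢
            omega
          · intro m h1 h2 hm
            rw [blkF_eq_iff_le ht' (by omega)] at hm
            omega
        · rcases Nat.lt_or_ge (t:ℕ) (K+2) with ht2 | ht2
          · -- t = K+1
            have ht' : (t:ℕ) = K+1 := by omega
            rw [ht']
            refine ⟨2^(K+1), by omega, by omega,
              (blkF_eq_iff_K1 (by omega)).mpr ⟨le_rfl, by omega⟩,
              ?_, ?_, fun _ => padicValNat.prime_pow _⟩
            · intro m m' h1 h2 h3' hm hLm'
              rw [blkF_eq_iff_K1 (by omega)] at hm ⊢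
              omega
            · intro m h1 h2 hm
              rw [blkF_eq_iff_K1 (by omega)] at hm
              omega
          · -- t = K+2
            have ht' : (t:ℕ) = K+2 := by omega
            rw [ht']
            refine ⟨3*2^K, by omega, by omega,
              (blkF_eq_iff_K2 (by omega) (by omega)).mpr le_rfl,
              ?_, ?_, by omega⟩
            · intro m m' h1 h2 h3' hm hLm'
              rw [blkF_eq_iff_K2 (by omega) (by omega)] at hm
              rw [blkF_eq_iff_K2 (by omega) (by omega)]
              omega
            · intro m h1 h2 hm
              rw [blkF_eq_iff_K2 (by omega) (by omega)] at hm
              omega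
      rw [SimpleGraph.connected_iff_exists_forall_reachable]
      have hbase_mem : Sum.inl (⟨L-1, by omega⟩ : Fin (2^(K+2)-1)) ∈
          (↑(Finset.univ.filter (fun x => GkF K x = (t:ℕ))) :
            Set (Fin (2^(K+2)-1) ⊕ Fin (K+2))) := by
        simp only [Finset.mem_coe, Finset.mem_filter, Finset.mem_univ, true_and]; simp only [GkF]
        rw [show (L-1)+1 = L by omega]
        exact hblkL
      refine ⟨⟨_, hbase_mem⟩, ?_⟩
      rintro ⟨(p | i), hw⟩
      · obtain ⟨pv, hpv⟩ := p
        have hw' : blkF K (pv+1) = (t:ℕ) := by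
          simp only [Finset.mem_coe, Finset.mem_filter, Finset.mem_univ, true_and] at hw; simpa only [GkF] using hw
        have hLle : L ≤ pv+1 := hLlow _ (by omega) (by omega) hw'
        exact reach_chain (K+2) _ (L-1) pv (by omega) hpv
          (fun m h1 h2 hm => by
            simp only [Finset.mem_coe, Finset.mem_filter, Finset.mem_univ, true_and]; simp only [GkF]
            exact hIv (pv+1) (m+1) (by omega) (by omega) (by omega) hw' (by omega))
      · have hw' : (i:ℕ) = (t:ℕ) := by
          simp only [Finset.mem_coe, Finset.mem_filter, Finset.mem_univ, true_and] at hw; simpa only [GkF] using hw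
        have hi2 : (t:ℕ) ≤ K+1 := by have := i.isLt; omega
        refine SimpleGraph.Adj.reachable ?_
        refine Gk_adj_vp (⟨L-1, by omega⟩ : Fin (2^(K+2)-1)) i ?_
        show padicValNat 2 ((L-1)+1) = (i:ℕ)
        rw [show (L-1)+1 = L by omega, hvL hi2, hw']
    · -- pairwise adjacency
      have main : ∀ s t : ℕ, t < K+3 → s < t →
          ∃ a ∈ Finset.univ.filter (fun x => GkF K x = s),
            ∃ b ∈ Finset.univ.filter (fun x => GkF K x = t), (Gk (K+2)).Adj a b := by
        intro s t hjlt hij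
        by_cases hC : t = K+2
        · rcases Nat.lt_trichotomy s K with hsK | hsK | hsK
          · -- s < K
            obtain ⟨d, hd⟩ : ∃ d, K = s + d + 1 := ⟨K - s - 1, by omega⟩
            have hps : (2:ℕ)^s < 2^K := Nat.pow_lt_pow_right (by norm_num) (by omega)
            have hps1 : (1:ℕ) ≤ 2^s := Nat.one_le_two_pow
            have hv : padicValNat 2 (3*2^K + 2^s) = s := by
              rw [hd, show 3*2^(s+d+1) + 2^s = 2^s * (3*2^(d+1)+1) by ring]
              exact v2_mul_odd _ _ ⟨3*2^d, by ring⟩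
            refine pair_v K s t (by omega) (3*2^K + 2^s) (by omega) (by omega) hv ?_
            rw [hC]
            exact (blkF_eq_iff_K2 (by omega) (by omega)).mpr (by omega)
          · -- s = K
            have hv : padicValNat 2 (3*2^K) = s := by
              rw [show 3*2^K = 2^K*3 by ring, v2_mul_odd K 3 ⟨1, by norm_num⟩, hsK]
            refine pair_v K s t (by omega) (3*2^K) (by omega) (by omega) hv ?_
            rw [hC]
            exact (blkF_eq_iff_K2 (by omega) (by omega)).mpr le_rfl
          · -- s = K+1
            have hsK' : s = K+1 := by omega
            refine pair_p K (3*2^K - 1) (by omega) (by omega) s t ?_ ?_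
            · rw [hsK']
              exact (blkF_eq_iff_K1 (by omega)).mpr ⟨by omega, by omega⟩
            · rw [show (3*2^K-1)+1 = 3*2^K by omega, hC]
              exact (blkF_eq_iff_K2 (by omega) (by omega)).mpr le_rfl
        · have hj1 : t ≤ K+1 := by omega
          by_cases hB : t = K+1 ∧ s = K
          · obtain ⟨hB1, hB2⟩ := hB
            refine pair_p K (2^(K+1) - 1) (by omega) (by omega) s t ?_ ?_
            · rw [hB2]
              exact (blkF_eq_iff_le le_rfl (by omega)).mpr ⟨by omega, by omega⟩
            · rw [show (2^(K+1)-1)+1 = 2^(K+1) by omega, hB1]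
              exact (blkF_eq_iff_K1 (by omega)).mpr ⟨le_rfl, by omega⟩
          · -- edge v_s - u_{2^t + 2^s}
            obtain ⟨d, hd⟩ : ∃ d, t = s + d + 1 := ⟨t - s - 1, by omega⟩
            have hps : (2:ℕ)^s < 2^t := Nat.pow_lt_pow_right (by norm_num) hij
            have hps1 : (1:ℕ) ≤ 2^s := Nat.one_le_two_pow
            have hpt : (2:ℕ)^(t+1) ≤ 2^(K+2) := Nat.pow_le_pow_right (by norm_num) (by omega)
            have hpt2 : (2:ℕ)^(t+1) = 2*2^t := by ring
            have hptK : (2:ℕ)^t ≤ 2^(K+1) := Nat.pow_le_pow_right (by norm_num) (by omega)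
            have hv : padicValNat 2 (2^t + 2^s) = s := by
              rw [hd, show (2:ℕ)^(s+d+1) + 2^s = 2^s * (2^(d+1)+1) by ring]
              exact v2_mul_odd _ _ ⟨2^d, by ring⟩
            refine pair_v K s t (by omega) (2^t + 2^s) (by omega) (by omega) hv ?_
            rcases Nat.lt_or_ge t (K+1) with hj2 | hj2
            · have hbt : (2:ℕ)^t ≤ 2^K := Nat.pow_le_pow_right (by norm_num) (by omega)
              exact (blkF_eq_iff_le (by omega) (by omega)).mpr ⟨by omega, by omega⟩
            · have hj3 : t = K+1 := by omega
              have hi3 : s < K := by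
                rcases Nat.lt_or_ge s K with h | h
                · exact h
                · exact absurd ⟨hj3, by omega⟩ hB
              have hpsK : (2:ℕ)^s < 2^K := Nat.pow_lt_pow_right (by norm_num) hi3
              rw [hj3]
              exact (blkF_eq_iff_K1 (by omega)).mpr ⟨by omega, by omega⟩
      intro i j hij
      rcases Nat.lt_trichotomy (i:ℕ) (j:ℕ) with h | h | h
      · exact main (i:ℕ) (j:ℕ) j.isLt h
      · exact absurd (Fin.ext h) hij
      · obtain ⟨a, ha, b, hb, hab⟩ := main (j:ℕ) (i:ℕ) i.isLt h
        exact ⟨b, hb, a, ha, hab.symm⟩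
end

section
/- There is a function f : ℕ × ℕ × ℕ → ℕ such that for all integers ℓ ≥ 1, t ≥ 2, k ≥ 1, every O_k-free graph G that does not contain K_{t,t} as a subgraph contains at most f(ℓ,t,k) pairwise vertex-disjoint cycles of length at most ℓ. -/
open SimpleGraph

def stmt3Rfun (ℓ t : ℕ) : ℕ → ℕ
  | 0 => t
  | n+1 => ℓ * stmt3Rfun ℓ t n + 1

lemma stmt3_t_le_rfun (ℓ t : ℕ) (hℓ : 1 ≤ ℓ) : ∀ n, t ≤ stmt3Rfun ℓ t n := by
  intro n
  induction n with
  | zero => exact le_rfl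
  | succ n ih =>
    calc t ≤ stmt3Rfun ℓ t n := ih
    _ ≤ ℓ * stmt3Rfun ℓ t n + 1 := by nlinarith
    _ = stmt3Rfun ℓ t (n+1) := rfl

lemma stmt3_steps {V ι : Type} [DecidableEq V] [DecidableEq ι] (G : SimpleGraph V)
    (ℓ t : ℕ) (hℓ : 1 ≤ ℓ) (ht : 2 ≤ t)
    (W : ι → Finset V) (C : Finset ι)
    (hcard : ∀ i ∈ C, (W i).card ≤ ℓ)
    (hadj : ∀ i ∈ C, ∀ j ∈ C, i ≠ j → ∃ x ∈ W i, ∃ y ∈ W j, G.Adj x y)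
    (v₀ : V) :
    ∀ (n : ℕ) (A : Finset ι), A ⊆ C → stmt3Rfun ℓ t n ≤ A.card →
    ∃ (B : Finset ι) (is : Fin n → ι) (us : Fin n → V),
      B ⊆ A ∧ t ≤ B.card ∧ (∀ s, is s ∈ A) ∧ Function.Injective is ∧
      (∀ s, us s ∈ W (is s)) ∧ (∀ s, is s ∉ B) ∧
      (∀ s, ∀ j ∈ B, ∃ y ∈ W j, G.Adj (us s) y) := by
  intro n
  induction n with
  | zero =>
    intro A hA hc
    exact ⟨A, Fin.elim0, Fin.elim0, Finset.Subset.refl A, hc,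
      fun s => s.elim0, fun s => s.elim0, fun s => s.elim0, fun s => s.elim0, fun s => s.elim0⟩
  | succ n ih =>
    intro A hA hc
    classical
    have hrf : stmt3Rfun ℓ t (n+1) = ℓ * stmt3Rfun ℓ t n + 1 := rfl
    have htr := stmt3_t_le_rfun ℓ t hℓ n
    have hge : stmt3Rfun ℓ t n ≤ ℓ * stmt3Rfun ℓ t n := Nat.le_mul_of_pos_left _ hℓ
    have hc' : ℓ * stmt3Rfun ℓ t n + 1 ≤ A.card := by rw [← hrf]; exact hc
    have hApos : 0 < A.card := by omega
    obtain ⟨i, hi⟩ := Finset.card_pos.mp hApos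
    set F0 : ι → V := fun j =>
      if h : ∃ x ∈ W i, ∃ y ∈ W j, G.Adj x y then h.choose else v₀ with hF0
    have hmaps : ∀ j ∈ A.erase i, F0 j ∈ W i ∧ ∃ y ∈ W j, G.Adj (F0 j) y := by
      intro j hj
      have hex := hadj i (hA hi) j (hA (Finset.mem_of_mem_erase hj))
        (Ne.symm (Finset.ne_of_mem_erase hj))
      rw [hF0]
      simp only [dif_pos hex]
      obtain ⟨hx, y, hy, hxy⟩ := hex.choose_spec
      exact ⟨hx, y, hy, hxy⟩
    have hEcard : (A.erase i).card = A.card - 1 := Finset.card_erase_of_mem hi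
    have hEpos : 0 < (A.erase i).card := by omega
    obtain ⟨j₀, hj₀⟩ := Finset.card_pos.mp hEpos
    have hWine : (W i).Nonempty := ⟨F0 j₀, (hmaps j₀ hj₀).1⟩
    have hmul : (W i).card * stmt3Rfun ℓ t n ≤ (A.erase i).card := by
      have := hcard i (hA hi)
      calc (W i).card * stmt3Rfun ℓ t n ≤ ℓ * stmt3Rfun ℓ t n :=
        Nat.mul_le_mul_right _ this
      _ ≤ (A.erase i).card := by omega
    obtain ⟨u, hu, hfib⟩ := Finset.exists_le_card_fiber_of_mul_le_card_of_maps_to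
      (fun j hj => (hmaps j hj).1) hWine hmul
    set F := (A.erase i).filter (fun j => F0 j = u) with hF
    have hFsub : F ⊆ A.erase i := Finset.filter_subset _ _
    obtain ⟨B, is, us, hBF, hBt, hisF, hisinj, husW, hisB, hadjB⟩ :=
      ih F ((hFsub.trans (Finset.erase_subset i A)).trans hA) hfib
    refine ⟨B, Fin.cons i is, Fin.cons u us, ?_, hBt, ?_, ?_, ?_, ?_, ?_⟩
    · exact hBF.trans (hFsub.trans (Finset.erase_subset i A))
    · intro s
      refine Fin.cases ?_ ?_ s
      · exact hi
      · intro s'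
        exact (hFsub.trans (Finset.erase_subset i A)) (hisF s')
    · apply Fin.cons_injective_of_injective _ hisinj
      rintro ⟨s', hs'⟩
      exact (Finset.notMem_erase i A) (hFsub (hs' ▸ hisF s'))
    · intro s
      refine Fin.cases ?_ ?_ s
      · exact hu
      · exact husW
    · intro s
      refine Fin.cases ?_ ?_ s
      · intro hiB
        exact (Finset.notMem_erase i A) (hFsub (hBF hiB))
      · exact hisB
    · intro s
      refine Fin.cases ?_ ?_ s
      · intro j hj
        have hjF := hBF hj
        have := (Finset.mem_filter.mp hjF).2
        have h2 := (hmaps j (hFsub hjF)).2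
        rwa [this] at h2
      · exact hadjB

lemma stmt3_clique_kst {V ι : Type} [DecidableEq V] [DecidableEq ι] (G : SimpleGraph V)
    (ℓ t : ℕ) (hℓ : 1 ≤ ℓ) (ht : 2 ≤ t)
    (W : ι → Finset V) (C : Finset ι)
    (hcard : ∀ i ∈ C, (W i).card ≤ ℓ)
    (hdisj : ∀ i ∈ C, ∀ j ∈ C, i ≠ j → ∀ x ∈ W i, ∀ y ∈ W j, x ≠ y)
    (hadj : ∀ i ∈ C, ∀ j ∈ C, i ≠ j → ∃ x ∈ W i, ∃ y ∈ W j, G.Adj x y)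
    (hbig : stmt3Rfun ℓ t (t * 2 ^ (t * ℓ)) ≤ C.card) :
    ContainsKst G t t := by
  classical
  set N := t * 2 ^ (t * ℓ) with hN
  -- a default vertex
  have hC2 : 1 < C.card := lt_of_lt_of_le (lt_of_lt_of_le ht (stmt3_t_le_rfun ℓ t hℓ N)) hbig
  obtain ⟨i₁, hi₁, j₁, hj₁, hij₁⟩ := Finset.one_lt_card.mp hC2
  obtain ⟨v₀, _, _⟩ := hadj i₁ hi₁ j₁ hj₁ hij₁
  obtain ⟨B, is, us, hBC, hBt, hisC, hisinj, husW, hisB, hadjB⟩ :=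
    stmt3_steps G ℓ t hℓ ht W C hcard hadj v₀ N C (Finset.Subset.refl C) hbig
  obtain ⟨T, hTB, hTt⟩ := Finset.exists_subset_card_eq hBt
  -- choice of neighbours
  set bfun : Fin N → ι → V := fun s j =>
    if h : ∃ y ∈ W j, G.Adj (us s) y then h.choose else v₀ with hbfun
  have hb : ∀ s, ∀ j ∈ T, bfun s j ∈ W j ∧ G.Adj (us s) (bfun s j) := by
    intro s j hj
    have hex := hadjB s j (hTB hj)
    rw [hbfun]
    simp only [dif_pos hex]
    exact hex.choose_spec
  set pat : Fin N → Finset V := fun s => T.image (bfun s) with hpat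
  set U := T.biUnion W with hU
  have hUcard : U.card ≤ t * ℓ := by
    calc U.card ≤ ∑ j ∈ T, (W j).card := Finset.card_biUnion_le
    _ ≤ T.card * ℓ := Finset.sum_le_card_nsmul T _ ℓ
        (fun j hj => hcard j (hBC (hTB hj)))
    _ = t * ℓ := by rw [hTt]
  have hmapsP : ∀ s : Fin N, s ∈ (Finset.univ : Finset (Fin N)) → pat s ∈ U.powerset := by
    intro s _
    rw [Finset.mem_powerset]
    intro x hx
    obtain ⟨j, hj, rfl⟩ := Finset.mem_image.mp hx
    exact Finset.mem_biUnion.mpr ⟨j, hj, (hb s j hj).1⟩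
  have hPcard : U.powerset.card * t ≤ (Finset.univ : Finset (Fin N)).card := by
    rw [Finset.card_powerset, Finset.card_univ, Fintype.card_fin, hN]
    calc 2 ^ U.card * t ≤ 2 ^ (t * ℓ) * t :=
      Nat.mul_le_mul_right _ (Nat.pow_le_pow_right (by norm_num) hUcard)
    _ = t * 2 ^ (t * ℓ) := Nat.mul_comm _ _
  obtain ⟨P, _, hfib⟩ := Finset.exists_le_card_fiber_of_mul_le_card_of_maps_to hmapsP
    ⟨∅, Finset.empty_mem_powerset U⟩ hPcard
  obtain ⟨S', hS'sub, hS't⟩ :=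
    Finset.exists_subset_card_eq (s := Finset.univ.filter (fun s => pat s = P)) hfib
  have hS'pat : ∀ s ∈ S', pat s = P := fun s hs =>
    (Finset.mem_filter.mp (hS'sub hs)).2
  -- injectivity of us
  have husinj : Function.Injective us := by
    intro s s' hss
    by_contra hne
    have hne' : is s ≠ is s' := fun h => hne (hisinj h)
    exact hdisj (is s) (hisC s) (is s') (hisC s') hne'
      (us s) (husW s) (us s') (husW s') hss
  have hS'ne : S'.Nonempty := Finset.card_pos.mp (by omega)
  obtain ⟨s₀, hs₀⟩ := hS'ne
  have hPcard' : P.card = t := by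
    rw [← hS'pat s₀ hs₀, hpat]
    rw [Finset.card_image_of_injOn, hTt]
    intro j hj j' hj' hbb
    by_contra hne
    exact hdisj j (hBC (hTB hj)) j' (hBC (hTB hj')) hne
      (bfun s₀ j) (hb s₀ j hj).1 (bfun s₀ j') (hb s₀ j' hj').1 hbb
  refine ⟨S'.image us, P, ?_, ?_, hPcard', ?_⟩
  · rw [Finset.disjoint_left]
    rintro x hx hxP
    obtain ⟨s, hs, rfl⟩ := Finset.mem_image.mp hx
    rw [← hS'pat s hs, hpat] at hxP
    obtain ⟨j, hj, hjx⟩ := Finset.mem_image.mp hxP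
    have hne : is s ≠ j := fun h => hisB s (h ▸ hTB hj)
    exact hdisj (is s) (hisC s) j (hBC (hTB hj)) hne
      (us s) (husW s) (bfun s j) (hb s j hj).1 hjx.symm
  · rw [Finset.card_image_of_injective _ husinj, hS't]
  · intro a ha p hp
    obtain ⟨s, hs, rfl⟩ := Finset.mem_image.mp ha
    rw [← hS'pat s hs, hpat] at hp
    obtain ⟨j, hj, rfl⟩ := Finset.mem_image.mp hp
    exact (hb s j hj).2

lemma stmt3_ramsey (n : ℕ) : ∀ s k : ℕ, s + k ≤ n → ∀ {α : Type} (r : α → α → Prop),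
    (∀ x y, r x y → r y x) → ∀ (S : Finset α), (s + k).choose s ≤ S.card →
    (∃ T ⊆ S, T.card = s ∧ ∀ i ∈ T, ∀ j ∈ T, i ≠ j → r i j) ∨
    (∃ T ⊆ S, T.card = k ∧ ∀ i ∈ T, ∀ j ∈ T, i ≠ j → ¬ r i j) := by
  induction n with
  | zero =>
    intro s k hsk α r hsym S hS
    have hs : s = 0 := by omega
    subst hs
    exact Or.inl ⟨∅, by simp⟩
  | succ n ih =>
    intro s k hsk α r hsym S hS
    classical
    rcases s with _ | s'
    · exact Or.inl ⟨∅, by simp⟩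
    rcases k with _ | k'
    · exact Or.inr ⟨∅, by simp⟩
    -- S nonempty
    have hSpos : 0 < S.card := lt_of_lt_of_le (Nat.choose_pos (by omega)) hS
    obtain ⟨a, ha⟩ := Finset.card_pos.mp hSpos
    set P := (S.erase a).filter (fun x => r a x) with hP
    set Q := (S.erase a).filter (fun x => ¬ r a x) with hQ
    have hPQ : P.card + Q.card = (S.erase a).card :=
      Finset.card_filter_add_card_filter_not _
    have hErase : (S.erase a).card = S.card - 1 := Finset.card_erase_of_mem ha
    have hPascal : (s' + 1 + (k' + 1)).choose (s' + 1)
        = (s' + (k' + 1)).choose s' + (s' + 1 + k').choose (s' + 1) := by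
      have h1 : s' + 1 + (k' + 1) = (s' + 1 + k') + 1 := by omega
      rw [h1, Nat.choose_succ_succ]
      congr 2
      omega
    have hcase : (s' + (k' + 1)).choose s' ≤ P.card ∨ ((s' + 1) + k').choose (s' + 1) ≤ Q.card := by
      by_contra hcon
      push_neg at hcon
      omega
    rcases hcase with hc | hc
    · rcases ih s' (k' + 1) (by omega) r hsym P hc with ⟨T, hTP, hTc, hcl⟩ | ⟨T, hTP, hTc, hind⟩
      · left
        have haT : a ∉ T := fun h => (Finset.notMem_erase a S)
          (Finset.mem_of_mem_filter a (hTP h))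
        refine ⟨insert a T, ?_, ?_, ?_⟩
        · exact Finset.insert_subset ha (hTP.trans ((Finset.filter_subset _ _).trans
            (Finset.erase_subset a S)))
        · rw [Finset.card_insert_of_notMem haT, hTc]
        · intro i hi j hj hij
          rcases Finset.mem_insert.mp hi with rfl | hi'
          · rcases Finset.mem_insert.mp hj with rfl | hj'
            · exact absurd rfl hij
            · exact (Finset.mem_filter.mp (hTP hj')).2
          · rcases Finset.mem_insert.mp hj with rfl | hj'
            · exact hsym _ _ (Finset.mem_filter.mp (hTP hi')).2
            · exact hcl i hi' j hj' hij
      · right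
        exact ⟨T, hTP.trans ((Finset.filter_subset _ _).trans (Finset.erase_subset a S)),
          hTc, hind⟩
    · rcases ih (s' + 1) k' (by omega) r hsym Q hc with ⟨T, hTQ, hTc, hcl⟩ | ⟨T, hTQ, hTc, hind⟩
      · left
        exact ⟨T, hTQ.trans ((Finset.filter_subset _ _).trans (Finset.erase_subset a S)),
          hTc, hcl⟩
      · right
        have haT : a ∉ T := fun h => (Finset.notMem_erase a S)
          (Finset.mem_of_mem_filter a (hTQ h))
        refine ⟨insert a T, ?_, ?_, ?_⟩
        · exact Finset.insert_subset ha (hTQ.trans ((Finset.filter_subset _ _).trans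
            (Finset.erase_subset a S)))
        · rw [Finset.card_insert_of_notMem haT, hTc]
        · intro i hi j hj hij
          rcases Finset.mem_insert.mp hi with rfl | hi'
          · rcases Finset.mem_insert.mp hj with rfl | hj'
            · exact absurd rfl hij
            · exact (Finset.mem_filter.mp (hTQ hj')).2
          · rcases Finset.mem_insert.mp hj with rfl | hj'
            · exact fun h => (Finset.mem_filter.mp (hTQ hi')).2 (hsym _ _ h)
            · exact hind i hi' j hj' hij


lemma stmt3_cycle_card {V : Type} [DecidableEq V] {G : SimpleGraph V} {v : V} {w : G.Walk v v}
    (h : w.IsCycle) : w.support.toFinset.card ≤ w.length := by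
  have hsup : w.support = v :: w.support.tail := w.support_eq_cons
  have hlen : w.support.length = w.length + 1 := w.length_support
  have htlen : w.support.tail.length = w.length := by
    rw [List.length_tail, hlen]; omega
  have h3 := h.three_le_length
  have htail : w.support.tail ≠ [] := by
    intro hnil
    rw [hnil] at htlen
    simp at htlen
    omega
  have h2 : w.support.getLast? = some v := by
    rw [List.getLast?_eq_getLast_of_ne_nil w.support_ne_nil, w.getLast_support]
  have hvtail : v ∈ w.support.tail := by
    rcases htl : w.support.tail with _ | ⟨x, l'⟩
    · exact absurd htl htail
    · rw [hsup, htl, List.getLast?_cons_cons] at h2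
      have hv : v ∈ (x :: l').getLast? := Option.mem_def.mpr h2
      obtain ⟨hne, hveq⟩ := List.mem_getLast?_eq_getLast hv
      rw [hveq]
      exact List.getLast_mem hne
  have heq : w.support.toFinset = w.support.tail.toFinset := by
    conv_lhs => rw [hsup]
    simp only [List.toFinset_cons]
    exact Finset.insert_eq_self.mpr (List.mem_toFinset.mpr hvtail)
  rw [heq]
  calc w.support.tail.toFinset.card ≤ w.support.tail.length := List.toFinset_card_le _
  _ = w.length := htlen



/-- There is a function `f : ℕ × ℕ × ℕ → ℕ` such that for all
`ℓ ≥ 1`, `t ≥ 2`, `k ≥ 1`, every `O_k`-free graph with no `K_{t,t}` subgraph contains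
at most `f (ℓ, t, k)` pairwise vertex-disjoint cycles of length at most `ℓ`. -/
theorem stmt3 :
    ∃ f : ℕ × ℕ × ℕ → ℕ,
      ∀ (ℓ t k : ℕ), 1 ≤ ℓ → 2 ≤ t → 1 ≤ k →
        ∀ (V : Type) [Fintype V] (G : SimpleGraph V),
          OkFree G k → ¬ ContainsKst G t t →
          ∀ (m : ℕ) (b : Fin m → V) (w : ∀ i, G.Walk (b i) (b i)),
            (∀ i, (w i).IsCycle) →
            (∀ i, (w i).length ≤ ℓ) →
            (∀ i j, i ≠ j → ∀ x ∈ (w i).support, ∀ y ∈ (w j).support, x ≠ y) →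
            m ≤ f (ℓ, t, k) := by
  classical
  refine ⟨fun p => (stmt3Rfun p.1 p.2.1 (p.2.1 * 2 ^ (p.2.1 * p.1)) + p.2.2).choose
      (stmt3Rfun p.1 p.2.1 (p.2.1 * 2 ^ (p.2.1 * p.1))), ?_⟩
  intro ℓ t k hℓ ht hk V _ G hOk hKst m b w hcyc hlen hdisj
  by_contra hm
  push_neg at hm
  set rr := stmt3Rfun ℓ t (t * 2 ^ (t * ℓ)) with hrr
  have hm' : (rr + k).choose rr < m := hm
  have hS : (rr + k).choose rr ≤ (Finset.univ : Finset (Fin m)).card := by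
    rw [Finset.card_univ, Fintype.card_fin]; omega
  have hsym : ∀ i j : Fin m, (∃ x ∈ (w i).support, ∃ y ∈ (w j).support, G.Adj x y) →
      (∃ x ∈ (w j).support, ∃ y ∈ (w i).support, G.Adj x y) := by
    rintro i j ⟨x, hx, y, hy, h⟩
    exact ⟨y, hy, x, hx, h.symm⟩
  rcases stmt3_ramsey (rr + k) rr k le_rfl
      (fun i j => ∃ x ∈ (w i).support, ∃ y ∈ (w j).support, G.Adj x y) hsym
      Finset.univ hS with ⟨T, hTS, hTc, hcl⟩ | ⟨T, hTS, hTc, hind⟩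
  · apply hKst
    apply stmt3_clique_kst G ℓ t hℓ ht (fun i => (w i).support.toFinset) T
    · intro i _
      exact le_trans (stmt3_cycle_card (hcyc i)) (hlen i)
    · intro i _ j _ hij x hx y hy
      exact hdisj i j hij x (List.mem_toFinset.mp hx) y (List.mem_toFinset.mp hy)
    · intro i hi j hj hij
      obtain ⟨x, hx, y, hy, hxy⟩ := hcl i hi j hj hij
      exact ⟨x, List.mem_toFinset.mpr hx, y, List.mem_toFinset.mpr hy, hxy⟩
    · rw [hTc]
  · apply hOk
    set e : Fin k → Fin m := fun s => (T.orderIsoOfFin hTc s : Fin m) with he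
    have heT : ∀ s, e s ∈ T := fun s => (T.orderIsoOfFin hTc s).2
    have heinj : Function.Injective e := fun a a' hab =>
      (T.orderIsoOfFin hTc).injective (Subtype.ext hab)
    refine ⟨fun s => b (e s), fun s => w (e s), fun s => hcyc _, ?_⟩
    intro s s' hss x hx y hy
    have hne : e s ≠ e s' := fun h => hss (heinj h)
    refine ⟨hdisj _ _ hne x hx y hy, ?_⟩
    intro hAdj
    exact hind _ (heT s) _ (heT s') hne ⟨x, hx, y, hy, hAdj⟩
end

section
/- There is a function g : ℕ × ℕ × ℕ → ℕ such that for all integers ℓ ≥ 3, t ≥ 2, k ≥ 1, every O_k-free graph G that does not contain K_{t,t} as a subgraph contains a set X of at most g(ℓ,t,k) vertices such that G − X has girth at least ℓ (i.e., G − X has no cycle of length less than ℓ). -/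
open SimpleGraph

def JoinedF {V : Type} (G : SimpleGraph V) (a b : Finset V) : Prop :=
  ∃ x ∈ a, ∃ y ∈ b, G.Adj x y


lemma exists_max_subset {α : Type} (Q : Finset α → Prop) (𝒟 : Finset α) (h0 : Q ∅) :
    ∃ 𝒜, 𝒜 ⊆ 𝒟 ∧ Q 𝒜 ∧ ∀ 𝒜' ⊆ 𝒟, Q 𝒜' → 𝒜'.card ≤ 𝒜.card := by
  classical
  have h1 : ∃ 𝒜, 𝒜 ⊆ 𝒟 ∧ 𝒜.card =
      Nat.findGreatest (fun n => ∃ 𝒜, 𝒜 ⊆ 𝒟 ∧ 𝒜.card = n ∧ Q 𝒜) 𝒟.card ∧ Q 𝒜 := by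
    exact Nat.findGreatest_spec (P := fun n => ∃ 𝒜, 𝒜 ⊆ 𝒟 ∧ 𝒜.card = n ∧ Q 𝒜)
      (m := 0) (Nat.zero_le _) ⟨∅, Finset.empty_subset _, rfl, h0⟩
  obtain ⟨𝒜, hsub, hcard, hQ⟩ := h1
  refine ⟨𝒜, hsub, hQ, ?_⟩
  intro 𝒜' hsub' hQ'
  rw [hcard]
  exact Nat.le_findGreatest (Finset.card_le_card hsub') ⟨𝒜', hsub', rfl, hQ'⟩

lemma step_lemma {V : Type} [DecidableEq V] (G : SimpleGraph V) {ℓ k q : ℕ} (hk1 : 1 ≤ k)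
    (𝒟 : Finset (Finset V))
    (hcard : ∀ a ∈ 𝒟, a.card ≤ ℓ)
    (hk : ∀ 𝒜 ⊆ 𝒟, (∀ a ∈ 𝒜, ∀ b ∈ 𝒜, a ≠ b → ¬ JoinedF G a b) → 𝒜.card < k)
    (hD : k * ℓ * q + 2 * k ≤ 𝒟.card) :
    ∃ a ∈ 𝒟, ∃ x ∈ a, ∃ ℰ ⊆ 𝒟.erase a, q ≤ ℰ.card ∧
      ∀ e ∈ ℰ, ∃ y ∈ e, G.Adj x y := by
  classical
  obtain ⟨𝒜, h𝒜sub, h𝒜anti, h𝒜max⟩ := exists_max_subset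
    (fun 𝒜 => ∀ a ∈ 𝒜, ∀ b ∈ 𝒜, a ≠ b → ¬ JoinedF G a b) 𝒟 (by simp)
  have h𝒜k : 𝒜.card < k := hk 𝒜 h𝒜sub h𝒜anti
  have key : ∀ c ∈ 𝒟 \ 𝒜, ∃ x ∈ 𝒜.biUnion id, ∃ y ∈ c, G.Adj x y := by
    intro c hc
    obtain ⟨hc𝒟, hc𝒜⟩ := Finset.mem_sdiff.mp hc
    by_contra hcon
    push_neg at hcon
    have hmem : ∀ a ∈ insert c 𝒜, ∀ b ∈ insert c 𝒜, a ≠ b → ¬ JoinedF G a b := by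
      intro a ha b hb hab
      rcases Finset.mem_insert.mp ha with ha' | ha'
      · rcases Finset.mem_insert.mp hb with hb' | hb'
        · exact absurd (ha'.trans hb'.symm) hab
        · subst ha'
          rintro ⟨x, hx, y, hy, hadj⟩
          exact hcon y (Finset.mem_biUnion.mpr ⟨b, hb', hy⟩) x hx hadj.symm
      · rcases Finset.mem_insert.mp hb with hb' | hb'
        · subst hb'
          rintro ⟨x, hx, y, hy, hadj⟩
          exact hcon x (Finset.mem_biUnion.mpr ⟨a, ha', hx⟩) y hy hadj
        · exact h𝒜anti a ha' b hb' hab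
    have h1 := h𝒜max _ (Finset.insert_subset hc𝒟 h𝒜sub) hmem
    have h2 : 𝒜.card < (insert c 𝒜).card := by
      rw [Finset.card_insert_of_notMem hc𝒜]; omega
    omega
  have hle := Finset.card_le_card h𝒜sub
  have hScard : k * ℓ * q + k + 1 ≤ (𝒟 \ 𝒜).card := by
    have h := Finset.card_sdiff_of_subset h𝒜sub
    omega
  choose F hFU hFy using key
  have hUne : (𝒜.biUnion id).Nonempty := by
    obtain ⟨c, hc⟩ : (𝒟 \ 𝒜).Nonempty := Finset.card_pos.mp (by omega)
    exact ⟨F c hc, hFU c hc⟩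
  have hUcard : (𝒜.biUnion id).card ≤ k * ℓ := by
    calc (𝒜.biUnion id).card ≤ 𝒜.card * ℓ :=
          Finset.card_biUnion_le_card_mul _ _ _ (fun a ha => hcard a (h𝒜sub ha))
      _ ≤ k * ℓ := Nat.mul_le_mul_right _ (le_of_lt h𝒜k)
  obtain ⟨x, hxU, hfib⟩ := Finset.exists_le_card_fiber_of_mul_le_card_of_maps_to
    (s := (𝒟 \ 𝒜).attach) (f := fun c => F c.1 c.2)
    (fun c _ => hFU c.1 c.2) hUne
    (by
      rw [Finset.card_attach]
      calc (𝒜.biUnion id).card * q ≤ k * ℓ * q := Nat.mul_le_mul_right _ hUcard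
        _ ≤ (𝒟 \ 𝒜).card := by omega)
  obtain ⟨a, ha𝒜, hxa⟩ := Finset.mem_biUnion.mp hxU
  refine ⟨a, h𝒜sub ha𝒜, x, hxa,
    (((𝒟 \ 𝒜).attach.filter (fun c => F c.1 c.2 = x)).image Subtype.val), ?_, ?_, ?_⟩
  · intro c hc
    obtain ⟨⟨c', hc'S⟩, hc'mem, rfl⟩ := Finset.mem_image.mp hc
    obtain ⟨hc𝒟, hc𝒜⟩ := Finset.mem_sdiff.mp hc'S
    refine Finset.mem_erase.mpr ⟨?_, hc𝒟⟩
    intro h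
    have h' : c' = a := h
    rw [h'] at hc𝒜
    exact hc𝒜 ha𝒜
  · rwa [Finset.card_image_of_injective _ Subtype.val_injective]
  · intro e he
    obtain ⟨⟨c', hc'S⟩, hc'mem, rfl⟩ := Finset.mem_image.mp he
    have hFe := (Finset.mem_filter.mp hc'mem).2
    have := hFy c' hc'S
    rwa [hFe] at this

lemma rec_lemma {V : Type} [DecidableEq V] (G : SimpleGraph V) {ℓ k t : ℕ} (hk1 : 1 ≤ k)
    (r : ℕ) :
    ∀ (𝒟 : Finset (Finset V)),
    (∀ a ∈ 𝒟, ∀ b ∈ 𝒟, a ≠ b → Disjoint a b) →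
    (∀ a ∈ 𝒟, a.card ≤ ℓ) →
    (∀ 𝒜 ⊆ 𝒟, (∀ a ∈ 𝒜, ∀ b ∈ 𝒜, a ≠ b → ¬ JoinedF G a b) → 𝒜.card < k) →
    (fun m => k * ℓ * m + 2 * k)^[r] t ≤ 𝒟.card →
    ∃ (A : Finset V) (ℰ : Finset (Finset V)), ℰ ⊆ 𝒟 ∧ A.card = r ∧ t ≤ ℰ.card ∧
      (∀ x ∈ A, ∀ e ∈ ℰ, x ∉ e ∧ ∃ y ∈ e, G.Adj x y) ∧
      (∀ x ∈ A, ∃ c ∈ 𝒟, x ∈ c) := by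
  induction r with
  | zero =>
    intro 𝒟 _ _ _ h
    exact ⟨∅, 𝒟, Finset.Subset.refl _, rfl, h, by simp, by simp⟩
  | succ r ih =>
    intro 𝒟 hdisj hcard hk hD
    rw [Function.iterate_succ_apply'] at hD
    obtain ⟨a, ha, x, hxa, ℰ', hℰ'sub, hℰ'card, hℰ'adj⟩ :=
      step_lemma G hk1 𝒟 hcard hk hD
    have hsub' : ℰ' ⊆ 𝒟 := hℰ'sub.trans (Finset.erase_subset _ _)
    obtain ⟨A, ℰ, hℰsub, hAcard, hℰcard, hprop, hwit⟩ := ih ℰ'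
      (fun a ha b hb => hdisj a (hsub' ha) b (hsub' hb))
      (fun a ha => hcard a (hsub' ha))
      (fun 𝒜 h𝒜 => hk 𝒜 (h𝒜.trans hsub'))
      hℰ'card
    have hxA : x ∉ A := by
      intro hx
      obtain ⟨c, hc, hxc⟩ := hwit x hx
      have hca : c ≠ a := Finset.ne_of_mem_erase (hℰ'sub hc)
      exact (Finset.disjoint_left.mp (hdisj c (hsub' hc) a ha hca)) hxc hxa
    refine ⟨insert x A, ℰ, hℰsub.trans hsub', ?_, hℰcard, ?_, ?_⟩
    · rw [Finset.card_insert_of_notMem hxA, hAcard]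
    · intro x' hx' e he
      rcases Finset.mem_insert.mp hx' with rfl | hx'
      · have hea : e ≠ a := Finset.ne_of_mem_erase (hℰ'sub (hℰsub he))
        refine ⟨?_, hℰ'adj e (hℰsub he)⟩
        intro hxe
        exact (Finset.disjoint_left.mp (hdisj e (hsub' (hℰsub he)) a ha hea)) hxe hxa
      · exact hprop x' hx' e he
    · intro x' hx'
      rcases Finset.mem_insert.mp hx' with rfl | hx'
      · exact ⟨a, ha, hxa⟩
      · obtain ⟨c, hc, hxc⟩ := hwit x' hx'
        exact ⟨c, hsub' hc, hxc⟩

lemma ktt_lemma {V : Type} [DecidableEq V] (G : SimpleGraph V) {ℓ t : ℕ}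
    (hl : 1 ≤ ℓ) (ht : 1 ≤ t)
    (A : Finset V) (ℰ : Finset (Finset V))
    (hdisj : ∀ a ∈ ℰ, ∀ b ∈ ℰ, a ≠ b → Disjoint a b)
    (hcard : ∀ a ∈ ℰ, a.card ≤ ℓ)
    (hA : A.card = ℓ ^ t * t) (hE : t ≤ ℰ.card)
    (hprop : ∀ x ∈ A, ∀ e ∈ ℰ, x ∉ e ∧ ∃ y ∈ e, G.Adj x y) :
    ContainsKst G t t := by
  classical
  obtain ⟨𝒟, h𝒟sub, h𝒟card⟩ := Finset.exists_subset_card_eq hE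
  have hadj : ∀ (x : {x // x ∈ A}) (c : {c // c ∈ 𝒟}), ∃ y, y ∈ c.1 ∧ G.Adj x.1 y := by
    intro x c
    obtain ⟨-, y, hy, h⟩ := hprop x.1 x.2 c.1 (h𝒟sub c.2)
    exact ⟨y, hy, h⟩
  let f : {x // x ∈ A} → (∀ c : {c // c ∈ 𝒟}, {y : V // y ∈ c.1}) :=
    fun x c => ⟨(hadj x c).choose, (hadj x c).choose_spec.1⟩
  have hfadj : ∀ x c, G.Adj x.1 (f x c).1 := fun x c => (hadj x c).choose_spec.2
  have hAne : A.Nonempty := by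
    rw [← Finset.card_pos, hA]
    exact Nat.mul_pos (Nat.pow_pos (by omega)) (by omega)
  haveI : Nonempty {x // x ∈ A} := ⟨⟨hAne.choose, hAne.choose_spec⟩⟩
  haveI : Nonempty (∀ c : {c // c ∈ 𝒟}, {y : V // y ∈ c.1}) := ⟨f (Classical.arbitrary _)⟩
  have hcardD : Fintype.card (∀ c : {c // c ∈ 𝒟}, {y : V // y ∈ c.1}) ≤ ℓ ^ t := by
    rw [Fintype.card_pi]
    calc ∏ c : {c // c ∈ 𝒟}, Fintype.card {y : V // y ∈ c.1}
        ≤ ℓ ^ (Finset.univ : Finset {c // c ∈ 𝒟}).card := by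
          apply Finset.prod_le_pow_card
          intro c _
          rw [Fintype.card_coe]
          exact hcard c.1 (h𝒟sub c.2)
      _ = ℓ ^ t := by rw [Finset.card_univ, Fintype.card_coe, h𝒟card]
  obtain ⟨y₀, hy₀⟩ := Fintype.exists_le_card_fiber_of_mul_le_card (n := t) f
    (by
      rw [Fintype.card_coe, hA]
      exact Nat.mul_le_mul_right _ hcardD)
  obtain ⟨S, hSsub, hScard⟩ := Finset.exists_subset_card_eq hy₀
  set A' := S.image Subtype.val with hA'
  have hA'card : A'.card = t := by
    rw [hA', Finset.card_image_of_injective _ Subtype.val_injective, hScard]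
  have hA'mem : ∀ x ∈ A', x ∈ A ∧ ∀ c : {c // c ∈ 𝒟}, G.Adj x (y₀ c).1 := by
    intro x hx
    obtain ⟨⟨x', hx'A⟩, hx'S, rfl⟩ := Finset.mem_image.mp hx
    have hfx : f ⟨x', hx'A⟩ = y₀ := (Finset.mem_filter.mp (hSsub hx'S)).2
    refine ⟨hx'A, fun c => ?_⟩
    have := hfadj ⟨x', hx'A⟩ c
    rwa [hfx] at this
  set B := Finset.univ.image (fun c : {c // c ∈ 𝒟} => (y₀ c).1) with hB
  have hBcard : B.card = t := by
    rw [hB, Finset.card_image_of_injective _ ?_, Finset.card_univ, Fintype.card_coe, h𝒟card]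
    intro c c' hcc
    by_contra hne
    have hne' : c.1 ≠ c'.1 := fun h => hne (Subtype.ext h)
    have hd := hdisj c.1 (h𝒟sub c.2) c'.1 (h𝒟sub c'.2) hne'
    have hcc' : (y₀ c).1 = (y₀ c').1 := hcc
    refine (Finset.disjoint_left.mp hd) (y₀ c).2 ?_
    rw [hcc']
    exact (y₀ c').2
  refine ⟨A', B, ?_, hA'card, hBcard, ?_⟩
  · rw [Finset.disjoint_left]
    intro x hx hxB
    obtain ⟨c, -, rfl⟩ := Finset.mem_image.mp hxB
    exact (hprop _ (hA'mem _ hx).1 c.1 (h𝒟sub c.2)).1 (y₀ c).2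
  · intro x hx b hb
    obtain ⟨c, -, rfl⟩ := Finset.mem_image.mp hb
    exact (hA'mem x hx).2 c
lemma indep_of_anticomplete {V : Type} [DecidableEq V] (G : SimpleGraph V) {ℓ k : ℕ}
    (𝒜 : Finset (Finset V))
    (hsc : ∀ s ∈ 𝒜, ∃ (v : V) (w : G.Walk v v), w.IsCycle ∧ w.length < ℓ ∧
      w.support.toFinset = s)
    (hdisj : ∀ a ∈ 𝒜, ∀ b ∈ 𝒜, a ≠ b → Disjoint a b)
    (hanti : ∀ a ∈ 𝒜, ∀ b ∈ 𝒜, a ≠ b → ¬ JoinedF G a b)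
    (hcard : 𝒜.card = k) :
    HasIndepCycles G k := by
  classical
  have e : {s // s ∈ 𝒜} ≃ Fin k := Fintype.equivFinOfCardEq (by rw [Fintype.card_coe, hcard])
  have hsc' : ∀ i : Fin k, ∃ (v : V) (w : G.Walk v v), w.IsCycle ∧ w.length < ℓ ∧
      w.support.toFinset = (e.symm i).1 := fun i => hsc _ (e.symm i).2
  choose b w hcyc hlen hsup using hsc'
  refine ⟨b, w, hcyc, ?_⟩
  intro i j hij x hx y hy
  have hxi : x ∈ (e.symm i).1 := by rw [← hsup i]; exact List.mem_toFinset.mpr hx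
  have hyj : y ∈ (e.symm j).1 := by rw [← hsup j]; exact List.mem_toFinset.mpr hy
  have hne : (e.symm i).1 ≠ (e.symm j).1 := by
    intro h
    exact hij (by rw [← e.symm.injective (Subtype.ext h)])
  constructor
  · intro h
    subst h
    exact (Finset.disjoint_left.mp (hdisj _ (e.symm i).2 _ (e.symm j).2 hne) hxi) hyj
  · intro hadj
    exact hanti _ (e.symm i).2 _ (e.symm j).2 hne ⟨x, hxi, y, hyj, hadj⟩

/-- There is a function `g : ℕ × ℕ × ℕ → ℕ` such that for all
`ℓ ≥ 3`, `t ≥ 2`, `k ≥ 1`, every `O_k`-free graph with no `K_{t,t}` subgraph has a set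
`X` of at most `g (ℓ, t, k)` vertices such that `G − X` has girth at least `ℓ`. -/
theorem stmt4 :
    ∃ g : ℕ × ℕ × ℕ → ℕ,
      ∀ (ℓ t k : ℕ), 3 ≤ ℓ → 2 ≤ t → 1 ≤ k →
        ∀ (V : Type) [Fintype V] (G : SimpleGraph V),
          OkFree G k → ¬ ContainsKst G t t →
          ∃ X : Finset V, X.card ≤ g (ℓ, t, k) ∧
            GirthAtLeast (G.induce {v | v ∉ X}) ℓ := by
  classical
  refine ⟨fun p => ((fun m => p.2.2 * p.1 * m + 2 * p.2.2)^[p.1 ^ p.2.1 * p.2.1] p.2.1) * p.1, ?_⟩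
  intro ℓ t k hl3 ht2 hk1 V _ G hok hkst
  letI : DecidableEq V := Classical.decEq V
  obtain ⟨𝒞, -, hC, hCmax⟩ := exists_max_subset
    (fun 𝒞 : Finset (Finset V) =>
      (∀ s ∈ 𝒞, ∃ (v : V) (w : G.Walk v v), w.IsCycle ∧ w.length < ℓ ∧
        w.support.toFinset = s) ∧
      (∀ a ∈ 𝒞, ∀ b ∈ 𝒞, a ≠ b → Disjoint a b))
    Finset.univ ⟨by simp, by simp⟩
  obtain ⟨hCcyc, hCdisj⟩ := hC
  have hcardC : ∀ a ∈ 𝒞, a.card ≤ ℓ := by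
    intro a ha
    obtain ⟨v, w, hcyc, hlen, hsup⟩ := hCcyc a ha
    calc a.card = w.support.toFinset.card := by rw [hsup]
      _ ≤ w.support.length := List.toFinset_card_le _
      _ = w.length + 1 := w.length_support
      _ ≤ ℓ := by omega
  have hkC : ∀ 𝒜 ⊆ 𝒞, (∀ a ∈ 𝒜, ∀ b ∈ 𝒜, a ≠ b → ¬ JoinedF G a b) → 𝒜.card < k := by
    intro 𝒜 hsub hanti
    by_contra h
    push_neg at h
    obtain ⟨𝒜', hsub', hcard'⟩ := Finset.exists_subset_card_eq h
    exact hok (indep_of_anticomplete G (ℓ := ℓ) 𝒜'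
      (fun s hs => hCcyc s (hsub (hsub' hs)))
      (fun a ha b hb => hCdisj a (hsub (hsub' ha)) b (hsub (hsub' hb)))
      (fun a ha b hb => hanti a (hsub' ha) b (hsub' hb)) hcard')
  have hCbound : 𝒞.card ≤ (fun m => k * ℓ * m + 2 * k)^[ℓ ^ t * t] t := by
    by_contra h
    push_neg at h
    obtain ⟨A, ℰ, hEs, hA, hE, hprop, -⟩ :=
      rec_lemma G hk1 (ℓ ^ t * t) 𝒞 hCdisj hcardC hkC (le_of_lt h)
    exact hkst (ktt_lemma G (by omega) (by omega) A ℰ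
      (fun a ha b hb => hCdisj a (hEs ha) b (hEs hb))
      (fun a ha => hcardC a (hEs ha)) hA hE hprop)
  refine ⟨𝒞.biUnion id, ?_, ?_⟩
  · calc (𝒞.biUnion id).card ≤ 𝒞.card * ℓ :=
        Finset.card_biUnion_le_card_mul _ _ _ (fun a ha => hcardC a ha)
      _ ≤ ((fun m => k * ℓ * m + 2 * k)^[ℓ ^ t * t] t) * ℓ :=
        Nat.mul_le_mul_right _ hCbound
  · intro v w hcyc
    by_contra hlen
    push_neg at hlen
    let ι : G.induce {v | v ∉ (𝒞.biUnion id : Finset V)} ↪g G :=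
      SimpleGraph.Embedding.induce _
    have hcyc' : (w.map ι.toHom).IsCycle :=
      (Walk.map_isCycle_iff_of_injective ι.injective).mpr hcyc
    have hlen' : (w.map ι.toHom).length < ℓ := by rwa [Walk.length_map]
    have havoid : ∀ u ∈ (w.map ι.toHom).support, u ∉ (𝒞.biUnion id : Finset V) := by
      intro u hu
      rw [Walk.support_map, List.mem_map] at hu
      obtain ⟨z, hz, rfl⟩ := hu
      exact z.2
    set s' := (w.map ι.toHom).support.toFinset with hs'
    have hstart : (ι v : V) ∈ s' := List.mem_toFinset.mpr (Walk.start_mem_support _)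
    have hs'avoid : ∀ u ∈ s', u ∉ (𝒞.biUnion id : Finset V) := by
      intro u hu
      exact havoid u (List.mem_toFinset.mp hu)
    have hs'new : s' ∉ 𝒞 := by
      intro hmem
      exact hs'avoid _ hstart (Finset.mem_biUnion.mpr ⟨s', hmem, hstart⟩)
    have hP : (∀ s ∈ insert s' 𝒞, ∃ (v : V) (w : G.Walk v v), w.IsCycle ∧ w.length < ℓ ∧
        w.support.toFinset = s) ∧
        (∀ a ∈ insert s' 𝒞, ∀ b ∈ insert s' 𝒞, a ≠ b → Disjoint a b) := by
      constructor
      · intro s hs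
        rcases Finset.mem_insert.mp hs with rfl | hs
        · exact ⟨ι v, w.map ι.toHom, hcyc', hlen', rfl⟩
        · exact hCcyc s hs
      · have hdnew : ∀ b ∈ 𝒞, Disjoint s' b := by
          intro b hb
          rw [Finset.disjoint_left]
          intro u hu hub
          exact hs'avoid u hu (Finset.mem_biUnion.mpr ⟨b, hb, hub⟩)
        intro a ha b hb hab
        rcases Finset.mem_insert.mp ha with rfl | ha
        · rcases Finset.mem_insert.mp hb with rfl | hb
          · exact absurd rfl hab
          · exact hdnew b hb
        · rcases Finset.mem_insert.mp hb with rfl | hb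
          · exact (hdnew a ha).symm
          · exact hCdisj a ha b hb hab
    have := hCmax (insert s' 𝒞) (Finset.subset_univ _) hP
    rw [Finset.card_insert_of_notMem hs'new] at this
    omega
end

section
/- There is a function f' : ℕ × ℕ → ℕ such that for all integers t ≥ 2 and k ≥ 1, every O_k-free graph G that does not contain K_{t,t} as a subgraph contains a set X of at most f'(t,k) vertices such that every banana of G contains a vertex of X. -/
open SimpleGraph

section Aux

open Finset

lemma pigeonhole_fin {α : Type} [DecidableEq α] {c : ℕ} (S : Finset α) (g : α → Fin c)
    {R : ℕ} (h : c * R < S.card) : ∃ i, R < (S.filter fun x => g x = i).card := by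
  by_contra hco
  push_neg at hco
  have hsub : S ⊆ (Finset.univ : Finset (Fin c)).biUnion fun i => S.filter fun x => g x = i :=
    fun x hx => Finset.mem_biUnion.mpr ⟨g x, Finset.mem_univ _, Finset.mem_filter.mpr ⟨hx, rfl⟩⟩
  have h1 := (Finset.card_le_card hsub).trans Finset.card_biUnion_le
  have h2 : ∑ i : Fin c, (S.filter fun x => g x = i).card ≤ c * R := by
    calc ∑ i : Fin c, (S.filter fun x => g x = i).card ≤ ∑ _i : Fin c, R :=
          Finset.sum_le_sum fun i _ => hco i
      _ = c * R := by simp [Finset.sum_const, mul_comm]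
  omega

lemma prehomog (c : ℕ) :
    ∀ n : ℕ, ∃ R : ℕ, ∀ (S : Finset ℕ), R ≤ S.card → ∀ f : ℕ → ℕ → Fin c,
      ∃ T : Finset ℕ, T ⊆ S ∧ T.card = n ∧ ∃ g : ℕ → Fin c,
        ∀ x ∈ T, ∀ y ∈ T, x < y → f x y = g x := by
  intro n
  induction n with
  | zero =>
      exact ⟨0, fun S _ f => ⟨∅, by simp, by simp, ⟨fun x => f x x, by simp⟩⟩⟩
  | succ n ih =>
      obtain ⟨R, hR⟩ := ih
      refine ⟨c * R + 1, fun S hS f => ?_⟩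
      have hSne : S.Nonempty := Finset.card_pos.mp (by omega)
      have haS : S.min' hSne ∈ S := S.min'_mem hSne
      set a := S.min' hSne with ha
      obtain ⟨i, hi⟩ : ∃ i, R ≤ ((S.erase a).filter fun x => f a x = i).card := by
        rcases Nat.eq_zero_or_pos c with hc | hc
        · subst hc
          exact (f a a).elim0
        rcases Nat.eq_zero_or_pos R with h0 | h0
        · exact ⟨f a a, by omega⟩
        · have hcard' : c * (R - 1) < (S.erase a).card := by
            have := S.card_erase_of_mem haS
            have hpos : 1 ≤ S.card := Finset.card_pos.mpr hSne
            have hmul : c * (R - 1) < c * R := mul_lt_mul_of_pos_left (by omega) hc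
            omega
          obtain ⟨i, hi⟩ := pigeonhole_fin (S.erase a) (f a) hcard'
          exact ⟨i, by omega⟩
      obtain ⟨T, hTsub, hTcard, g, hg⟩ := hR _ hi f
      have hTS' : T ⊆ S.erase a := hTsub.trans (Finset.filter_subset _ _)
      have haT : a ∉ T := fun h => (Finset.mem_erase.mp (hTS' h)).1 rfl
      refine ⟨insert a T, ?_, ?_, (fun x => if x = a then i else g x), ?_⟩
      · intro x hx
        rcases Finset.mem_insert.mp hx with rfl | hx
        · exact haS
        · exact (Finset.erase_subset _ _) (hTS' hx)
      · rw [Finset.card_insert_of_notMem haT, hTcard]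
      · intro x hx y hy hxy
        rcases Finset.mem_insert.mp hx with rfl | hx
        · show f a y = if a = a then i else g a
          rw [if_pos rfl]
          rcases Finset.mem_insert.mp hy with rfl | hy
          · exact absurd hxy (lt_irrefl a)
          · exact (Finset.mem_filter.mp (hTsub hy)).2
        · have hxa : x ≠ a := fun h => haT (h ▸ hx)
          show f x y = if x = a then i else g x
          rw [if_neg hxa]
          rcases Finset.mem_insert.mp hy with rfl | hy
          · exfalso
            have hax : a ≤ x := S.min'_le x ((Finset.erase_subset _ _) (hTS' hx))
            omega
          · exact hg x hx y hy hxy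

lemma ramseyN (c m : ℕ) :
    ∃ R : ℕ, ∀ (S : Finset ℕ), R ≤ S.card → ∀ f : ℕ → ℕ → Fin c,
      ∃ T : Finset ℕ, T ⊆ S ∧ m ≤ T.card ∧ ∃ col : Fin c,
        ∀ x ∈ T, ∀ y ∈ T, x < y → f x y = col := by
  obtain ⟨R, hR⟩ := prehomog c (c * m + 1)
  refine ⟨R, fun S hS f => ?_⟩
  obtain ⟨T₀, hsub, hcard, g, hg⟩ := hR S hS f
  obtain ⟨col, hcol⟩ : ∃ col, m < (T₀.filter fun x => g x = col).card :=
    pigeonhole_fin T₀ g (by omega)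
  refine ⟨T₀.filter fun x => g x = col, (Finset.filter_subset _ _).trans hsub, by omega, col,
    fun x hx y hy hxy => ?_⟩
  rw [hg x (Finset.mem_of_mem_filter _ hx) y (Finset.mem_of_mem_filter _ hy) hxy]
  exact (Finset.mem_filter.mp hx).2

variable {V : Type} {G : SimpleGraph V}

lemma deg2_mem [Fintype V] {x a b y : V} (hdeg : degN G x = 2) (hab : a ≠ b)
    (ha : G.Adj x a) (hb : G.Adj x b) (hy : G.Adj x y) : y = a ∨ y = b := by
  classical
  have hfin : (G.neighborSet x).Finite := Set.toFinite _
  have hcard : (G.neighborSet x).ncard = 2 := by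
    rw [← Nat.card_coe_set_eq]; exact hdeg
  have hsub : ({a, b} : Set V) ⊆ G.neighborSet x := by
    intro z hz
    rcases hz with rfl | hz
    · exact ha
    · rw [Set.mem_singleton_iff] at hz; subst hz; exact hb
  have hpair : ({a, b} : Set V).ncard = 2 := Set.ncard_pair hab
  have heq : ({a, b} : Set V) = G.neighborSet x :=
    Set.eq_of_subset_of_ncard_le hsub (by rw [hcard, hpair]) hfin
  have hmem : y ∈ ({a, b} : Set V) := heq ▸ (hy : y ∈ G.neighborSet x)
  simpa using hmem

lemma path_loop_nil {v : V} (p : G.Walk v v) (hp : p.IsPath) : p = Walk.nil := by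
  cases p with
  | nil => rfl
  | cons h p' =>
    exfalso
    have hnd := hp.support_nodup
    rw [Walk.support_cons] at hnd
    exact (List.nodup_cons.mp hnd).1 p'.end_mem_support

lemma internal_two_nbrs {u v : V} (p : G.Walk u v) (hp : p.IsPath) :
    ∀ x ∈ p.support, x ≠ u → x ≠ v →
    ∃ a ∈ p.support, ∃ b ∈ p.support, a ≠ b ∧ G.Adj x a ∧ G.Adj x b := by
  induction p with
  | nil =>
    intro x hx hxu _
    rw [Walk.support_nil] at hx
    simp at hx
    exact absurd hx hxu
  | @cons u w v h p ih =>
    intro x hx hxu hxv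
    rw [Walk.support_cons] at hx
    rcases List.mem_cons.mp hx with rfl | hx
    · exact absurd rfl hxu
    · by_cases hxw : x = w
      · subst hxw
        cases p with
        | nil => exact absurd rfl hxv
        | @cons _ y _ h2 p2 =>
          refine ⟨u, Walk.start_mem_support _, y, ?_, ?_, h.symm, h2⟩
          · rw [Walk.support_cons, Walk.support_cons]
            simp
          · intro huy
            have hup : u ∉ (Walk.cons h2 p2).support := ((Walk.cons_isPath_iff _ _).mp hp).2
            apply hup
            rw [Walk.support_cons]
            exact List.mem_cons.mpr (Or.inr (huy ▸ (Walk.start_mem_support p2)))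
      · obtain ⟨a, haS, b, hbS, hab, h1, h2⟩ :=
          ih ((Walk.cons_isPath_iff _ _).mp hp).1 x hx hxw hxv
        exact ⟨a, by rw [Walk.support_cons]; exact List.mem_cons_of_mem _ haS,
          b, by rw [Walk.support_cons]; exact List.mem_cons_of_mem _ hbS, hab, h1, h2⟩

lemma endpoint_closure [Fintype V] {u v : V} (hne : u ≠ v) (p q : G.Walk u v)
    (hp : p.IsPath) (hq : q.IsPath) (hpq : p ≠ q)
    (hint : ∀ x ∈ p.support, x ∈ q.support → x = u ∨ x = v)
    (hdu : degN G u = 2) {y : V} (hy : G.Adj u y) :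
    y ∈ p.support ∨ y ∈ q.support := by
  cases p with
  | nil => exact absurd rfl hne
  | @cons _ a _ h p' =>
    cases q with
    | nil => exact absurd rfl hne
    | @cons _ b _ h' q' =>
      by_cases hab : a = b
      · subst hab
        have haq : a ∈ (Walk.cons h' q').support := by
          rw [Walk.support_cons]; exact List.mem_cons_of_mem _ (Walk.start_mem_support q')
        have hap : a ∈ (Walk.cons h p').support := by
          rw [Walk.support_cons]; exact List.mem_cons_of_mem _ (Walk.start_mem_support p')
        rcases hint a hap haq with rfl | rfl
        · exact absurd rfl h.ne'
        · -- a = v, so p' : Walk v v, q' : Walk v v are nil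
          have hp' : p' = Walk.nil := path_loop_nil p' ((Walk.cons_isPath_iff _ _).mp hp).1
          have hq' : q' = Walk.nil := path_loop_nil q' ((Walk.cons_isPath_iff _ _).mp hq).1
          subst hp'; subst hq'
          exact absurd rfl hpq
      · rcases deg2_mem hdu hab h h' hy with rfl | rfl
        · left
          rw [Walk.support_cons]
          exact List.mem_cons_of_mem _ (Walk.start_mem_support p')
        · right
          rw [Walk.support_cons]
          exact List.mem_cons_of_mem _ (Walk.start_mem_support q')

lemma banana_closure [Fintype V] {u v : V} (hne : u ≠ v) (p q : G.Walk u v)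
    (hp : p.IsPath) (hq : q.IsPath) (hpq : p ≠ q)
    (hint : ∀ x ∈ p.support, x ∈ q.support → x = u ∨ x = v)
    (hdp : ∀ x ∈ p.support, x ≠ u → x ≠ v → degN G x = 2)
    (hdq : ∀ x ∈ q.support, x ≠ u → x ≠ v → degN G x = 2) :
    ∀ x, (x ∈ p.support ∨ x ∈ q.support) → degN G x = 2 → ∀ y, G.Adj x y →
      (y ∈ p.support ∨ y ∈ q.support) := by
  intro x hx hdx y hxy
  by_cases hxu : x = u
  · subst hxu; exact endpoint_closure hne p q hp hq hpq hint hdx hxy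
  by_cases hxv : x = v
  · subst hxv
    have hrev := endpoint_closure (Ne.symm hne) p.reverse q.reverse hp.reverse hq.reverse
      (fun hh => hpq (by rw [← p.reverse_reverse, hh, q.reverse_reverse]))
      (fun z hz hz' => by
        rw [Walk.support_reverse, List.mem_reverse] at hz hz'
        rcases hint z hz hz' with h1 | h1
        · exact Or.inr h1
        · exact Or.inl h1) hdx hxy
    rcases hrev with h1 | h1
    · left; rwa [Walk.support_reverse, List.mem_reverse] at h1
    · right; rwa [Walk.support_reverse, List.mem_reverse] at h1
  rcases hx with hx | hx
  · obtain ⟨a, haS, b, hbS, hab, h1, h2⟩ := internal_two_nbrs p hp x hx hxu hxv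
    rcases deg2_mem hdx hab h1 h2 hxy with rfl | rfl
    · exact Or.inl haS
    · exact Or.inl hbS
  · obtain ⟨a, haS, b, hbS, hab, h1, h2⟩ := internal_two_nbrs q hq x hx hxu hxv
    rcases deg2_mem hdx hab h1 h2 hxy with rfl | rfl
    · exact Or.inr haS
    · exact Or.inr hbS

lemma walk_reach (T : Set V) (hT : ∀ x ∈ T, degN G x = 2 → ∀ y, G.Adj x y → y ∈ T) :
    ∀ {a b : V} (w : G.Walk a b), a ∈ T →
      (∀ x ∈ w.support, x ∈ T) ∨ (∃ x ∈ w.support, degN G x ≠ 2 ∧ x ∈ T) := by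
  intro a b w
  induction w with
  | nil =>
    intro ha
    left
    intro x hx
    rw [Walk.support_nil] at hx
    simp at hx
    subst hx
    exact ha
  | @cons a c b h p ih =>
    intro ha
    by_cases hd : degN G a = 2
    · have hnext : c ∈ T := hT _ ha hd _ h
      rcases ih hnext with hall | ⟨x, hx, hxd, hxT⟩
      · left
        intro x hx
        rw [Walk.support_cons] at hx
        rcases List.mem_cons.mp hx with rfl | hx
        · exact ha
        · exact hall x hx
      · exact Or.inr ⟨x, by rw [Walk.support_cons]; exact List.mem_cons_of_mem _ hx, hxd, hxT⟩
    · exact Or.inr ⟨a, Walk.start_mem_support _, hd, ha⟩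

lemma rotate_support_mem [DecidableEq V] {u w : V} (c : G.Walk u u) (hnil : c ≠ Walk.nil)
    (hw : w ∈ c.support) : ∀ x, x ∈ (c.rotate w hw).support ↔ x ∈ c.support := by
  intro x
  have hperm := Walk.support_rotate c w hw
  have htail : ∀ y, y ∈ (c.rotate w hw).support.tail ↔ y ∈ c.support.tail :=
    fun y => hperm.mem_iff
  have hu_tail : u ∈ c.support.tail := by
    cases c with
    | nil => exact absurd rfl hnil
    | cons h p => rw [Walk.support_cons]; exact p.end_mem_support
  constructor
  · intro hx
    rw [Walk.support_eq_cons] at hx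
    rcases List.mem_cons.mp hx with rfl | hx
    · exact hw
    · rw [Walk.support_eq_cons]
      exact List.mem_cons_of_mem _ ((htail x).mp hx)
  · intro hx
    rw [Walk.support_eq_cons] at hx
    rcases List.mem_cons.mp hx with rfl | hx
    · rw [Walk.support_eq_cons]
      exact List.mem_cons_of_mem _ ((htail x).mpr hu_tail)
    · rw [Walk.support_eq_cons]
      exact List.mem_cons_of_mem _ ((htail x).mpr hx)

lemma mem_support_append_reverse {u v : V} (p q : G.Walk u v) :
    ∀ x, x ∈ (p.append q.reverse).support ↔ (x ∈ p.support ∨ x ∈ q.support) := by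
  intro x
  rw [Walk.mem_support_append_iff, Walk.support_reverse, List.mem_reverse]

lemma edge_mem_path_eq {u v : V} (hne : u ≠ v) (p : G.Walk u v) (hp : p.IsPath)
    (he : s(u, v) ∈ p.edges) : ∃ (h : G.Adj u v), p = Walk.cons h Walk.nil := by
  cases p with
  | nil => simp at he
  | @cons _ w _ h p' =>
    rw [Walk.edges_cons] at he
    rcases List.mem_cons.mp he with heq | he'
    · have hvw : v = w := by
        rcases Sym2.eq_iff.mp heq with ⟨-, h2⟩ | ⟨h1, h2⟩
        · exact h2
        · exact absurd h2.symm hne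
      subst hvw
      have hp' : p' = Walk.nil := path_loop_nil p' ((Walk.cons_isPath_iff _ _).mp hp).1
      exact ⟨h, by rw [hp']⟩
    · exfalso
      have : u ∈ p'.support := p'.fst_mem_support_of_mem_edges he'
      exact ((Walk.cons_isPath_iff _ _).mp hp).2 this

lemma banana_isCycle {u v : V} (hne : u ≠ v) (p q : G.Walk u v)
    (hp : p.IsPath) (hq : q.IsPath) (hpq : p ≠ q)
    (hint : ∀ x ∈ p.support, x ∈ q.support → x = u ∨ x = v) :
    (p.append q.reverse).IsCycle := by
  refine ⟨⟨⟨?_⟩, ?_⟩, ?_⟩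
  · -- edges nodup
    rw [Walk.edges_append]
    rw [List.nodup_append']
    refine ⟨hp.isTrail.edges_nodup, hq.reverse.isTrail.edges_nodup, ?_⟩
    intro e hep heq'
    rw [Walk.edges_reverse, List.mem_reverse] at heq'
    induction e with
    | h x y =>
      have hxp : x ∈ p.support := p.fst_mem_support_of_mem_edges hep
      have hyp : y ∈ p.support := p.snd_mem_support_of_mem_edges hep
      have hxq : x ∈ q.support := q.fst_mem_support_of_mem_edges heq'
      have hyq : y ∈ q.support := q.snd_mem_support_of_mem_edges heq'
      have hadj : G.Adj x y := p.adj_of_mem_edges hep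
      have hxuv := hint x hxp hxq
      have hyuv := hint y hyp hyq
      have heuv : s(x, y) = s(u, v) := by
        rcases hxuv with rfl | rfl
        · rcases hyuv with rfl | rfl
          · exact absurd rfl hadj.ne
          · rfl
        · rcases hyuv with rfl | rfl
          · exact Sym2.eq_swap
          · exact absurd rfl hadj.ne
      rw [heuv] at hep heq'
      obtain ⟨h1, hp1⟩ := edge_mem_path_eq hne p hp hep
      obtain ⟨h2, hq1⟩ := edge_mem_path_eq hne q hq heq'
      rw [hp1, hq1] at hpq
      exact hpq rfl
  · -- ≠ nil
    cases p with
    | nil => exact absurd rfl hne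
    | cons h p' => simp [Walk.cons_append]
  · -- support tail nodup
    rw [Walk.tail_support_append, List.nodup_append']
    have hpn : p.support.tail.Nodup := by
      have h1 := hp.support_nodup
      rw [p.support_eq_cons] at h1
      exact (List.nodup_cons.mp h1).2
    have hqn : q.reverse.support.tail.Nodup := by
      have h1 := hq.reverse.support_nodup
      rw [q.reverse.support_eq_cons] at h1
      exact (List.nodup_cons.mp h1).2
    refine ⟨hpn, hqn, ?_⟩
    intro x hxp hxq
    have hxp' : x ∈ p.support := by
      rw [p.support_eq_cons]; exact List.mem_cons_of_mem _ hxp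
    have hxq'' : x ∈ q.reverse.support := by
      rw [q.reverse.support_eq_cons]; exact List.mem_cons_of_mem _ hxq
    have hxq' : x ∈ q.support := by
      rwa [Walk.support_reverse, List.mem_reverse] at hxq''
    rcases hint x hxp' hxq' with rfl | rfl
    · have h1 := hp.support_nodup
      rw [p.support_eq_cons] at h1
      exact (List.nodup_cons.mp h1).1 hxp
    · have h1 := hq.reverse.support_nodup
      rw [q.reverse.support_eq_cons] at h1
      exact (List.nodup_cons.mp h1).1 hxq

def IsBan {V : Type} (G : SimpleGraph V) (S : Finset V) : Prop :=
  ∃ (u v : V) (p q : G.Walk u v), u ≠ v ∧ p.IsPath ∧ q.IsPath ∧ p ≠ q ∧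
    (∀ x ∈ p.support, x ∈ q.support → x = u ∨ x = v) ∧
    (∀ x ∈ p.support, x ≠ u → x ≠ v → degN G x = 2) ∧
    (∀ x ∈ q.support, x ≠ u → x ≠ v → degN G x = 2) ∧
    ∀ x, x ∈ S ↔ (x ∈ p.support ∨ x ∈ q.support)

open Classical in
noncomputable def Dcore {V : Type} (G : SimpleGraph V) (S : Finset V) : Finset V :=
  S.filter (fun x => degN G x ≠ 2)

variable {V : Type} {G : SimpleGraph V}

lemma mem_Dcore {S : Finset V} {x : V} : x ∈ Dcore G S ↔ x ∈ S ∧ degN G x ≠ 2 := by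
  unfold Dcore
  exact Finset.mem_filter

lemma Dcore_subset (S : Finset V) : Dcore G S ⊆ S := fun x hx => (mem_Dcore.mp hx).1

lemma ban_nonempty {S : Finset V} (h : IsBan G S) : S.Nonempty := by
  obtain ⟨u, v, p, q, hne, hp, hq, hpq, hint, hdp, hdq, hiff⟩ := h
  exact ⟨u, (hiff u).mpr (Or.inl p.start_mem_support)⟩

lemma Dcore_card_le {S : Finset V} (h : IsBan G S) : (Dcore G S).card ≤ 2 := by
  classical
  obtain ⟨u, v, p, q, hne, hp, hq, hpq, hint, hdp, hdq, hiff⟩ := h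
  have hsub : Dcore G S ⊆ {u, v} := by
    intro x hx
    obtain ⟨hxS, hxd⟩ := mem_Dcore.mp hx
    by_cases hxu : x = u
    · simp [hxu]
    by_cases hxv : x = v
    · simp [hxv]
    exfalso
    rcases (hiff x).mp hxS with hxp | hxq
    · exact hxd (hdp x hxp hxu hxv)
    · exact hxd (hdq x hxq hxu hxv)
  calc (Dcore G S).card ≤ ({u, v} : Finset V).card := Finset.card_le_card hsub
    _ ≤ 2 := by
        have := Finset.card_insert_le u ({v} : Finset V)
        simpa using this

lemma ban_closure [Fintype V] {S : Finset V} (h : IsBan G S) :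
    ∀ x ∈ S, degN G x = 2 → ∀ y, G.Adj x y → y ∈ S := by
  obtain ⟨u, v, p, q, hne, hp, hq, hpq, hint, hdp, hdq, hiff⟩ := h
  intro x hx hdx y hxy
  exact (hiff y).mpr
    (banana_closure hne p q hp hq hpq hint hdp hdq x ((hiff x).mp hx) hdx y hxy)

lemma ban_reach [Fintype V] {S : Finset V} (h : IsBan G S) (T : Set V)
    (hT : ∀ x ∈ T, degN G x = 2 → ∀ y, G.Adj x y → y ∈ T) (w : V) (hw : w ∈ S)
    (hwT : w ∈ T) : (∀ x ∈ S, (x : V) ∈ T) ∨ ∃ b ∈ Dcore G S, (b : V) ∈ T := by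
  classical
  obtain ⟨u, v, p, q, hne, hp, hq, hpq, hint, hdp, hdq, hiff⟩ := h
  set c0 := p.append q.reverse with hc0
  have hsupp : ∀ x, x ∈ c0.support ↔ x ∈ S := by
    intro x
    rw [mem_support_append_reverse p q x, hiff x]
  have hvS : v ∈ c0.support := (hsupp v).mpr ((hiff v).mpr (Or.inl p.end_mem_support))
  have hnil : c0 ≠ Walk.nil := by
    intro hn
    rw [hn, Walk.support_nil] at hvS
    simp at hvS
    exact hne hvS.symm
  have hwc : w ∈ c0.support := (hsupp w).mpr hw
  have hrot := rotate_support_mem c0 hnil hwc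
  rcases walk_reach T hT (c0.rotate w hwc) hwT with hall | ⟨x, hx, hxd, hxT⟩
  · left
    intro x hxS
    exact hall x ((hrot x).mpr ((hsupp x).mpr hxS))
  · right
    exact ⟨x, mem_Dcore.mpr ⟨(hsupp x).mp ((hrot x).mp hx), hxd⟩, hxT⟩

lemma ban_cycle {S : Finset V} (h : IsBan G S) :
    ∃ (x : V) (c : G.Walk x x), c.IsCycle ∧ ∀ y, y ∈ c.support ↔ y ∈ S := by
  obtain ⟨u, v, p, q, hne, hp, hq, hpq, hint, hdp, hdq, hiff⟩ := h
  refine ⟨u, p.append q.reverse, banana_isCycle hne p q hp hq hpq hint, fun y => ?_⟩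
  rw [mem_support_append_reverse p q y, hiff y]

lemma indep_pair [Fintype V] {S S' : Finset V} (hban : IsBan G S) (hban' : IsBan G S')
    (hSS' : S ≠ S') (hg1 : ∀ a, ¬(a ∈ Dcore G S ∧ a ∈ S')) (hg2 : ∀ a, ¬(a ∈ Dcore G S' ∧ a ∈ S))
    (hnoedge : ¬ ∃ a ∈ Dcore G S, ∃ b ∈ Dcore G S', G.Adj a b) :
    ∀ x ∈ S, ∀ y ∈ S', x ≠ y ∧ ¬ G.Adj x y := by
  have hT : ∀ x ∈ (↑S' : Set V), degN G x = 2 → ∀ y, G.Adj x y → y ∈ (↑S' : Set V) := by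
    intro x hx hdx y hxy
    exact ban_closure hban' x hx hdx y hxy
  have hT' : ∀ x ∈ (↑S : Set V), degN G x = 2 → ∀ y, G.Adj x y → y ∈ (↑S : Set V) := by
    intro x hx hdx y hxy
    exact ban_closure hban x hx hdx y hxy
  have hdisj : ∀ z, z ∈ S → z ∈ S' → False := by
    intro z hz hz'
    by_cases hdz : degN G z = 2
    · rcases ban_reach hban (↑S' : Set V) hT z hz hz' with hsub | ⟨b, hb, hbT⟩
      · rcases ban_reach hban' (↑S : Set V) hT' z hz' hz with hsub' | ⟨b, hb, hbT⟩
        · exact hSS' (Finset.Subset.antisymm (fun x hx => hsub x hx) (fun x hx => hsub' x hx))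
        · exact hg2 b ⟨hb, hbT⟩
      · exact hg1 b ⟨hb, hbT⟩
    · exact hg1 z ⟨mem_Dcore.mpr ⟨hz, hdz⟩, hz'⟩
  intro x hx y hy
  refine ⟨fun hxy => hdisj x hx (hxy ▸ hy), fun hadj => ?_⟩
  by_cases hdx : degN G x = 2
  · exact hdisj y (ban_closure hban x hx hdx y hadj) hy
  by_cases hdy : degN G y = 2
  · exact hdisj x hx (ban_closure hban' y hy hdy x hadj.symm)
  exact hnoedge ⟨x, mem_Dcore.mpr ⟨hx, hdx⟩, y, mem_Dcore.mpr ⟨hy, hdy⟩, hadj⟩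

open Classical in
noncomputable def dv {V : Type} (G : SimpleGraph V) (junk : V) (S : Finset V) : Fin 2 → V :=
  fun i => if i = 0 then (Dcore G S).toList.getD 0 junk
           else (Dcore G S).toList.getD 1 ((Dcore G S).toList.getD 0 junk)

lemma dv_mem {junk : V} {S : Finset V} (h : (Dcore G S).Nonempty) :
    ∀ i, dv G junk S i ∈ Dcore G S := by
  intro i
  rcases htl : (Dcore G S).toList with _ | ⟨a, l⟩
  · exact absurd (Finset.toList_eq_nil.mp htl) (Finset.nonempty_iff_ne_empty.mp h)
  have ha : a ∈ Dcore G S := Finset.mem_toList.mp (htl ▸ List.mem_cons_self)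
  simp only [dv, htl]
  split_ifs
  · simpa using ha
  · rcases l with _ | ⟨b, l'⟩
    · simpa using ha
    · have hb : b ∈ Dcore G S := Finset.mem_toList.mp (htl ▸ by simp)
      simpa using hb

lemma dv_cover {junk : V} {S : Finset V} (hcard : (Dcore G S).card ≤ 2) :
    ∀ x ∈ Dcore G S, x = dv G junk S 0 ∨ x = dv G junk S 1 := by
  intro x hx
  have hxl : x ∈ (Dcore G S).toList := Finset.mem_toList.mpr hx
  have hlen : (Dcore G S).toList.length ≤ 2 := by
    rw [Finset.length_toList]; exact hcard
  rcases htl : (Dcore G S).toList with _ | ⟨a, l⟩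
  · rw [htl] at hxl; simp at hxl
  rcases l with _ | ⟨b, l'⟩
  · rw [htl] at hxl; simp at hxl
    left; simp [dv, htl, hxl]
  rcases l' with _ | ⟨c, l''⟩
  · rw [htl] at hxl; simp at hxl
    rcases hxl with rfl | rfl
    · left; simp [dv, htl]
    · right; simp [dv, htl]
  · rw [htl] at hlen; simp at hlen

def decodeCol : Fin 5 → Fin 2 × Fin 2 :=
  ![(0, 0), (0, 0), (0, 1), (1, 0), (1, 1)]

open Classical in
noncomputable def colf {V : Type} (G : SimpleGraph V) (junk : V) (S S' : Finset V) : Fin 5 :=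
  if ((Dcore G S).Nonempty ∧ (Dcore G S').Nonempty) then
    (if G.Adj (dv G junk S 0) (dv G junk S' 0) then 1
     else if G.Adj (dv G junk S 0) (dv G junk S' 1) then 2
     else if G.Adj (dv G junk S 1) (dv G junk S' 0) then 3
     else if G.Adj (dv G junk S 1) (dv G junk S' 1) then 4
     else 0)
  else 0

lemma colf_zero {junk : V} {S S' : Finset V} (hS : (Dcore G S).card ≤ 2)
    (hS' : (Dcore G S').card ≤ 2) (h : colf G junk S S' = 0) :
    ¬ ∃ a ∈ Dcore G S, ∃ b ∈ Dcore G S', G.Adj a b := by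
  rintro ⟨a, ha, b, hb, hab⟩
  have hne : (Dcore G S).Nonempty ∧ (Dcore G S').Nonempty := ⟨⟨a, ha⟩, ⟨b, hb⟩⟩
  rw [colf, if_pos hne] at h
  rcases dv_cover (junk := junk) hS a ha with rfl | rfl <;>
    rcases dv_cover (junk := junk) hS' b hb with rfl | rfl <;>
    split_ifs at h <;> first
      | exact absurd h (by decide)
      | exact (by assumption : ¬ _) hab

lemma colf_pos {junk : V} {S S' : Finset V} {s s' : Fin 2} {c : Fin 5}
    (hdec : decodeCol c = (s, s')) (hc : c ≠ 0) (h : colf G junk S S' = c) :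
    (Dcore G S).Nonempty ∧ (Dcore G S').Nonempty ∧
      G.Adj (dv G junk S s) (dv G junk S' s') := by
  by_cases hne : (Dcore G S).Nonempty ∧ (Dcore G S').Nonempty
  · refine ⟨hne.1, hne.2, ?_⟩
    rw [colf, if_pos hne] at h
    split_ifs at h with h1 h2 h3 h4
    · rw [← h] at hdec
      have : s = 0 ∧ s' = 0 := by
        have := hdec.symm
        simp [decodeCol] at this
        exact ⟨this.1, this.2⟩
      obtain ⟨rfl, rfl⟩ := this
      exact h1
    · rw [← h] at hdec
      have : s = 0 ∧ s' = 1 := by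
        have := hdec.symm
        simp [decodeCol] at this
        exact ⟨this.1, this.2⟩
      obtain ⟨rfl, rfl⟩ := this
      exact h2
    · rw [← h] at hdec
      have : s = 1 ∧ s' = 0 := by
        have := hdec.symm
        simp [decodeCol] at this
        exact ⟨this.1, this.2⟩
      obtain ⟨rfl, rfl⟩ := this
      exact h3
    · rw [← h] at hdec
      have : s = 1 ∧ s' = 1 := by
        have := hdec.symm
        simp [decodeCol] at this
        exact ⟨this.1, this.2⟩
      obtain ⟨rfl, rfl⟩ := this
      exact h4
    · exact absurd h.symm hc
  · rw [colf, if_neg hne] at h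
    exact absurd h.symm hc

def GoodFam {V : Type} (G : SimpleGraph V) (F : Finset (Finset V)) : Prop :=
  ∀ S ∈ F, ∀ S' ∈ F, S ≠ S' → ∀ a : V, ¬(a ∈ Dcore G S ∧ a ∈ S')

lemma mainlem {V : Type} [Fintype V] (G : SimpleGraph V) (t k : ℕ) (ht : 2 ≤ t) (hk : 1 ≤ k)
    (R : ℕ)
    (hram : ∀ (S : Finset ℕ), R ≤ S.card → ∀ f : ℕ → ℕ → Fin 5,
      ∃ T : Finset ℕ, T ⊆ S ∧ (k + (t + t)) ≤ T.card ∧ ∃ col : Fin 5,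
        ∀ x ∈ T, ∀ y ∈ T, x < y → f x y = col)
    (hok : OkFree G k) (hkst : ¬ ContainsKst G t t) :
    ∃ X : Finset V, X.card ≤ 3 * R ∧ ∀ S : Finset V, IsBan G S → ∃ x ∈ X, x ∈ S := by
  classical
  by_cases hV : Nonempty V
  case neg =>
    exact ⟨∅, by simp, fun S hS => absurd ⟨hS.choose⟩ hV⟩
  obtain ⟨junk⟩ := hV
  set 𝒮 : Finset (Finset V) := Finset.univ.filter (fun S => IsBan G S) with h𝒮
  set 𝒢 : Finset (Finset (Finset V)) := 𝒮.powerset.filter (GoodFam G) with h𝒢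
  have hEmptyG : ∅ ∈ 𝒢 := by
    rw [h𝒢, Finset.mem_filter, Finset.mem_powerset]
    exact ⟨Finset.empty_subset _, fun S hS => absurd hS (Finset.notMem_empty S)⟩
  obtain ⟨F, hF𝒢, hFmax⟩ := Finset.exists_max_image 𝒢 Finset.card ⟨∅, hEmptyG⟩
  have hFsub : F ⊆ 𝒮 := Finset.mem_powerset.mp (Finset.mem_filter.mp hF𝒢).1
  have hFGood : GoodFam G F := (Finset.mem_filter.mp hF𝒢).2
  have hFban : ∀ S ∈ F, IsBan G S := fun S hS => (Finset.mem_filter.mp (hFsub hS)).2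
  have hFcard : F.card ≤ R := by
    by_contra hge
    push_neg at hge
    have hlen : F.toList.length = F.card := Finset.length_toList F
    set e : ℕ → Finset V := fun i => F.toList.getD i ∅ with he
    have hmeme : ∀ i, i < F.card → e i ∈ F := by
      intro i hi
      have hi' : i < F.toList.length := by omega
      rw [he]
      simp only []
      rw [List.getD_eq_get (i := ⟨i, hi'⟩)]
      exact Finset.mem_toList.mp (List.get_mem _ _)
    have hinj : ∀ i, i < F.card → ∀ j, j < F.card → e i = e j → i = j := by
      intro i hi j hj hij
      have hi' : i < F.toList.length := by omega
      have hj' : j < F.toList.length := by omega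
      rw [he] at hij
      simp only [] at hij
      rw [List.getD_eq_get (i := ⟨i, hi'⟩), List.getD_eq_get (i := ⟨j, hj'⟩)] at hij
      have := List.nodup_iff_injective_get.mp (Finset.nodup_toList F) hij
      exact Fin.mk.inj_iff.mp this
    obtain ⟨T, hTsub, hTcard, col, hcol⟩ :=
      hram (Finset.range F.card) (by rw [Finset.card_range]; omega)
        (fun i j => colf G junk (e i) (e j))
    have hTlt : ∀ i ∈ T, i < F.card := fun i hi => Finset.mem_range.mp (hTsub hi)
    by_cases hcol0 : col = 0
    · subst hcol0
      obtain ⟨T', hT'sub, hT'card⟩ := Finset.exists_subset_card_eq (s := T) (n := k) (by omega)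
      set σ := T'.orderIsoOfFin hT'card with hσ
      set idx : Fin k → ℕ := fun i => ((σ i : T') : ℕ) with hidx
      have hidxT : ∀ i, idx i ∈ T := fun i => hT'sub (σ i).2
      have hidxlt : ∀ i, idx i < F.card := fun i => hTlt _ (hidxT i)
      have hidxinj : ∀ i j : Fin k, i ≠ j → idx i ≠ idx j := by
        intro i j hij h
        exact hij (σ.injective (Subtype.ext h))
      have hSmem : ∀ i, e (idx i) ∈ F := fun i => hmeme _ (hidxlt i)
      have hSban : ∀ i : Fin k, IsBan G (e (idx i)) := fun i => hFban _ (hSmem i)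
      have hSne : ∀ i j : Fin k, i ≠ j → e (idx i) ≠ e (idx j) := by
        intro i j hij h
        exact hidxinj i j hij (hinj _ (hidxlt i) _ (hidxlt j) h)
      have hpairs : ∀ i j : Fin k, i ≠ j →
          ∀ x ∈ e (idx i), ∀ y ∈ e (idx j), x ≠ y ∧ ¬ G.Adj x y := by
        intro i j hij
        have hg1 := hFGood _ (hSmem i) _ (hSmem j) (hSne i j hij)
        have hg2 := hFGood _ (hSmem j) _ (hSmem i) (hSne j i (Ne.symm hij))
        rcases Nat.lt_or_ge (idx i) (idx j) with hlt | hge'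
        · have hc := hcol _ (hidxT i) _ (hidxT j) hlt
          have hnoe := colf_zero (Dcore_card_le (hSban i)) (Dcore_card_le (hSban j)) hc
          exact indep_pair (hSban i) (hSban j) (hSne i j hij) hg1 hg2 hnoe
        · have hlt' : idx j < idx i := by
            rcases Nat.lt_or_ge (idx j) (idx i) with h | h
            · exact h
            · exact absurd (Nat.le_antisymm hge' h).symm (hidxinj i j hij)
          have hc := hcol _ (hidxT j) _ (hidxT i) hlt'
          have hnoe := colf_zero (Dcore_card_le (hSban j)) (Dcore_card_le (hSban i)) hc
          have hsw := indep_pair (hSban j) (hSban i) (hSne j i (Ne.symm hij)) hg2 hg1 hnoe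
          intro x hx y hy
          obtain ⟨h1, h2⟩ := hsw y hy x hx
          exact ⟨h1.symm, fun ha => h2 ha.symm⟩
      have hcyc : ∀ i : Fin k, ∃ (x : V) (c : G.Walk x x), c.IsCycle ∧
          ∀ y, y ∈ c.support ↔ y ∈ e (idx i) := fun i => ban_cycle (hSban i)
      choose b c hc1 hc2 using hcyc
      exact hok ⟨b, c, hc1, fun i j hij x hx y hy =>
        hpairs i j hij x ((hc2 i x).mp hx) y ((hc2 j y).mp hy)⟩
    · obtain ⟨T', hT'sub, hT'card⟩ := Finset.exists_subset_card_eq (s := T) (n := t + t) (by omega)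
      set σ := T'.orderIsoOfFin hT'card with hσ
      set idx : Fin (t + t) → ℕ := fun i => ((σ i : T') : ℕ) with hidx
      have hidxT : ∀ i, idx i ∈ T := fun i => hT'sub (σ i).2
      have hidxlt : ∀ i, idx i < F.card := fun i => hTlt _ (hidxT i)
      have hidxinj : ∀ i j : Fin (t + t), i ≠ j → idx i ≠ idx j := by
        intro i j hij h
        exact hij (σ.injective (Subtype.ext h))
      have hidxmono : ∀ i j : Fin (t + t), i < j → idx i < idx j := by
        intro i j hij
        exact Subtype.coe_lt_coe.mpr (σ.strictMono hij)
      have hSmem : ∀ i, e (idx i) ∈ F := fun i => hmeme _ (hidxlt i)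
      have hSne : ∀ i j : Fin (t + t), i ≠ j → e (idx i) ≠ e (idx j) := by
        intro i j hij h
        exact hidxinj i j hij (hinj _ (hidxlt i) _ (hidxlt j) h)
      have hmono : ∀ i j : Fin (t + t), i < j →
          (Dcore G (e (idx i))).Nonempty ∧ (Dcore G (e (idx j))).Nonempty ∧
          G.Adj (dv G junk (e (idx i)) (decodeCol col).1)
                (dv G junk (e (idx j)) (decodeCol col).2) := by
        intro i j hij
        exact colf_pos (Prod.mk.eta (p := decodeCol col)).symm hcol0
          (hcol _ (hidxT i) _ (hidxT j) (hidxmono i j hij))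
      have hNEi : ∀ i : Fin (t + t), (Dcore G (e (idx i))).Nonempty := by
        intro i
        by_cases h0 : i = (⟨0, by omega⟩ : Fin (t + t))
        · have := hmono i ⟨1, by omega⟩ (by rw [h0]; exact Fin.mk_lt_mk.mpr Nat.zero_lt_one)
          exact this.1
        · have hpos : (⟨0, by omega⟩ : Fin (t + t)) < i := by
            rcases Nat.eq_zero_or_pos (i : ℕ) with hz | hz
            · exact absurd (Fin.ext hz) h0
            · exact Fin.mk_lt_mk.mpr hz |>.trans_le (le_of_eq (Fin.eta i i.2).symm) |>.trans_le (le_refl _)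
          exact (hmono _ i hpos).2.1
      have hdvne : ∀ i j : Fin (t + t), i ≠ j → ∀ si sj : Fin 2,
          dv G junk (e (idx i)) si ≠ dv G junk (e (idx j)) sj := by
        intro i j hij si sj heq
        refine hFGood _ (hSmem i) _ (hSmem j) (hSne i j hij) (dv G junk (e (idx i)) si)
          ⟨dv_mem (hNEi i) si, ?_⟩
        rw [heq]
        exact Dcore_subset _ (dv_mem (hNEi j) sj)
      set A : Finset V := (Finset.univ : Finset (Fin t)).image
        (fun i => dv G junk (e (idx (Fin.castAdd t i))) (decodeCol col).1) with hA
      set B : Finset V := (Finset.univ : Finset (Fin t)).image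
        (fun i => dv G junk (e (idx (Fin.natAdd t i))) (decodeCol col).2) with hB
      have hcastne : ∀ i j : Fin t, i ≠ j → Fin.castAdd t i ≠ Fin.castAdd t j :=
        fun i j hij h => hij (Fin.castAdd_injective _ _ h)
      have hnatne : ∀ i j : Fin t, i ≠ j → Fin.natAdd t i ≠ Fin.natAdd t j := by
        intro i j hij h
        have hval : (t + (i : ℕ)) = t + (j : ℕ) := congrArg Fin.val h
        exact hij (Fin.ext (by omega))
      have hcn : ∀ i j : Fin t, Fin.castAdd t i ≠ Fin.natAdd t j := by
        intro i j h
        have : (i : ℕ) = t + j := congrArg Fin.val h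
        omega
      have hcnlt : ∀ i j : Fin t, Fin.castAdd t i < Fin.natAdd t j := by
        intro i j
        rw [Fin.lt_def]
        simp only [Fin.coe_castAdd, Fin.coe_natAdd]
        omega
      have hcardA : A.card = t := by
        rw [hA, Finset.card_image_of_injOn, Finset.card_univ, Fintype.card_fin]
        intro i _ j _ h
        by_contra hij
        exact hdvne _ _ (hcastne i j hij) _ _ h
      have hcardB : B.card = t := by
        rw [hB, Finset.card_image_of_injOn, Finset.card_univ, Fintype.card_fin]
        intro i _ j _ h
        by_contra hij
        exact hdvne _ _ (hnatne i j hij) _ _ h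
      have hdisj : Disjoint A B := by
        rw [Finset.disjoint_left]
        intro a haA haB
        rw [hA, Finset.mem_image] at haA
        rw [hB, Finset.mem_image] at haB
        obtain ⟨i, -, hi⟩ := haA
        obtain ⟨j, -, hj⟩ := haB
        exact hdvne _ _ (hcn i j) _ _ (hi.trans hj.symm)
      have hadj : ∀ a ∈ A, ∀ b ∈ B, G.Adj a b := by
        intro a haA b hbB
        rw [hA, Finset.mem_image] at haA
        rw [hB, Finset.mem_image] at hbB
        obtain ⟨i, -, hi⟩ := haA
        obtain ⟨j, -, hj⟩ := hbB
        rw [← hi, ← hj]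
        exact (hmono _ _ (hcnlt i j)).2.2
      exact hkst ⟨A, B, hdisj, hcardA, hcardB, hadj⟩
  set pick : Finset V → V := fun S => if h : S.Nonempty then h.choose else junk with hpick
  have hpickmem : ∀ S : Finset V, S.Nonempty → pick S ∈ S := by
    intro S hS
    rw [hpick]
    simp only [dif_pos hS]
    exact hS.choose_spec
  refine ⟨F.biUnion (fun S => insert (pick S) (Dcore G S)), ?_, ?_⟩
  · calc (F.biUnion (fun S => insert (pick S) (Dcore G S))).card
        ≤ ∑ S ∈ F, (insert (pick S) (Dcore G S)).card := Finset.card_biUnion_le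
      _ ≤ ∑ _S ∈ F, 3 := by
          refine Finset.sum_le_sum ?_
          intro S hS
          have h1 := Finset.card_insert_le (pick S) (Dcore G S)
          have h2 := Dcore_card_le (hFban S hS)
          omega
      _ = 3 * F.card := by rw [Finset.sum_const, smul_eq_mul, mul_comm]
      _ ≤ 3 * R := by omega
  · intro S hSban
    by_cases hSF : S ∈ F
    · exact ⟨pick S, Finset.mem_biUnion.mpr ⟨S, hSF, Finset.mem_insert_self _ _⟩,
        hpickmem S (ban_nonempty hSban)⟩
    · have hSbad : ¬ GoodFam G (insert S F) := by
        intro hgood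
        have hmem𝒢 : insert S F ∈ 𝒢 := by
          rw [h𝒢, Finset.mem_filter, Finset.mem_powerset]
          refine ⟨?_, hgood⟩
          intro A hA
          rcases Finset.mem_insert.mp hA with rfl | hA
          · rw [h𝒮, Finset.mem_filter]
            exact ⟨Finset.mem_univ _, hSban⟩
          · exact hFsub hA
        have hle := hFmax _ hmem𝒢
        rw [Finset.card_insert_of_notMem hSF] at hle
        omega
      unfold GoodFam at hSbad
      push_neg at hSbad
      obtain ⟨A, hA, B, hB, hAB, a, haD, haB⟩ := hSbad
      rcases Finset.mem_insert.mp hA with rfl | hAF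
      · rcases Finset.mem_insert.mp hB with rfl | hBF
        · exact absurd rfl hAB
        · refine ⟨a, Finset.mem_biUnion.mpr ⟨B, hBF, Finset.mem_insert_of_mem ?_⟩,
            Dcore_subset _ haD⟩
          exact mem_Dcore.mpr ⟨haB, (mem_Dcore.mp haD).2⟩
      · rcases Finset.mem_insert.mp hB with rfl | hBF
        · exact ⟨a, Finset.mem_biUnion.mpr ⟨A, hAF, Finset.mem_insert_of_mem haD⟩, haB⟩
        · exact absurd ⟨haD, haB⟩ (hFGood A hAF B hBF hAB a)

end Aux

/-- There is a function `f' : ℕ × ℕ → ℕ` such that for all `t ≥ 2`,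
`k ≥ 1`, every `O_k`-free graph with no `K_{t,t}` subgraph has a set `X` of at most
`f' (t, k)` vertices meeting every banana of `G` (a banana is a pair of distinct
vertices joined by two internally disjoint paths all of whose internal vertices have
degree 2 in `G`). -/
theorem stmt5 :
    ∃ f' : ℕ × ℕ → ℕ,
      ∀ (t k : ℕ), 2 ≤ t → 1 ≤ k →
        ∀ (V : Type) [Fintype V] (G : SimpleGraph V),
          OkFree G k → ¬ ContainsKst G t t →
          ∃ X : Finset V, X.card ≤ f' (t, k) ∧
            ∀ (u v : V), u ≠ v →
              ∀ (p q : G.Walk u v), p.IsPath → q.IsPath → p ≠ q →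
                (∀ x ∈ p.support, x ∈ q.support → x = u ∨ x = v) →
                (∀ x ∈ p.support, x ≠ u → x ≠ v → degN G x = 2) →
                (∀ x ∈ q.support, x ≠ u → x ≠ v → degN G x = 2) →
                ∃ x ∈ X, x ∈ p.support ∨ x ∈ q.support := by
  classical
  refine ⟨fun pr => 3 * (ramseyN 5 (pr.2 + (pr.1 + pr.1))).choose, ?_⟩
  intro t k ht hk V _ G hok hkst
  obtain ⟨X, hXcard, hX⟩ :=
    mainlem G t k ht hk _ (ramseyN 5 (k + (t + t))).choose_spec hok hkst
  refine ⟨X, hXcard, ?_⟩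
  intro u v huv p q hp hq hpq hint hdp hdq
  have hban : IsBan G (p.support.toFinset ∪ q.support.toFinset) := by
    refine ⟨u, v, p, q, huv, hp, hq, hpq, hint, hdp, hdq, fun x => ?_⟩
    simp [List.mem_toFinset]
  obtain ⟨x, hxX, hxS⟩ := hX _ hban
  refine ⟨x, hxX, ?_⟩
  simpa [List.mem_toFinset] using hxS
end

section
/- For every integer k ≥ 1, every O_k-free graph G of girth at least 11 with at least one vertex has average degree at most 2k, i.e., |E(G)| ≤ k · |V(G)|. -/
open SimpleGraph

namespace Stmt6Aux


open SimpleGraph.Walk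

variable {V : Type} [Fintype V] [DecidableEq V] {G : SimpleGraph V} [DecidableRel G.Adj]

omit [Fintype V] [DecidableEq V] [DecidableRel G.Adj] in
/-- In a path starting at `a`, any edge containing `a` goes to the second vertex. -/
lemma edge_head {a c b x : V} (h : G.Adj a c) (q : G.Walk c b)
    (hp : (Walk.cons h q).IsPath) (he : s(a, x) ∈ (Walk.cons h q).edges) : x = c := by
  rw [Walk.edges_cons, List.mem_cons] at he
  rcases he with he | he
  · rw [Sym2.eq_iff] at he
    rcases he with ⟨-, rfl⟩ | ⟨rfl, rfl⟩
    · rfl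
    · exact absurd rfl h.ne
  · exfalso
    have : a ∈ q.support := q.fst_mem_support_of_mem_edges he
    rw [Walk.cons_isPath_iff] at hp
    exact hp.2 this

omit [Fintype V] [DecidableEq V] [DecidableRel G.Adj] in
lemma end_mem_tail {a : V} (w : G.Walk a a) (hnil : w ≠ Walk.nil) : a ∈ w.support.tail := by
  cases w with
  | nil => exact absurd rfl hnil
  | cons h q => simpa using q.end_mem_support

omit [Fintype V] [DecidableRel G.Adj] in
lemma mem_support_rotate {a c₂ x : V} (w : G.Walk a a) (hw : w.IsCycle) (h2 : c₂ ∈ w.support)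
    (hx : x ∈ w.support) : x ∈ (w.rotate c₂ h2).support := by
  have hx' : x ∈ w.support.tail := by
    rcases (w.mem_support_iff).mp hx with rfl | h
    · exact end_mem_tail w hw.ne_nil
    · exact h
  exact List.mem_of_mem_tail (((support_rotate w c₂ h2).perm.mem_iff).mpr hx')

omit [Fintype V] [DecidableRel G.Adj] in
/-- A shorter arc of a cycle between two of its vertices. -/
lemma cycle_arc {a c₁ c₂ : V} (w : G.Walk a a) (hw : w.IsCycle)
    (h1 : c₁ ∈ w.support) (h2 : c₂ ∈ w.support) (hne : c₁ ≠ c₂) :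
    ∃ A : G.Walk c₂ c₁, A.IsPath ∧ (∀ x ∈ A.support, x ∈ w.support) ∧
      (∀ e ∈ A.edges, e ∈ w.edges) ∧ 2 * A.length ≤ w.length := by
  have hw' : (w.rotate c₂ h2).IsCycle := hw.rotate h2
  have hc₁' : c₁ ∈ (w.rotate c₂ h2).support := mem_support_rotate w hw h2 h1
  set w' := w.rotate c₂ h2 with hw'def
  have hlen' : w'.length = w.length := by
    rw [← length_darts, ← length_darts, (rotate_darts w c₂ h2).perm.length_eq]
  have hspec := w'.take_spec hc₁'
  set A₁ := w'.takeUntil c₁ hc₁' with hA₁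
  set A₂ := w'.dropUntil c₁ hc₁' with hA₂
  have hsum : A₁.length + A₂.length = w.length := by
    rw [← hlen', ← hspec, length_append]
  have hsupp : w'.support = A₁.support ++ A₂.support.tail := by
    rw [← hspec, support_append]
  have htails : w'.support.tail = A₁.support.tail ++ A₂.support.tail := by
    rw [hsupp, List.tail_append_of_ne_nil (support_ne_nil _)]
  have hnd := hw'.2
  rw [htails, List.nodup_append] at hnd
  obtain ⟨hnd₁, hnd₂, hdisj⟩ := hnd
  have hc₁mem : c₁ ∈ A₁.support.tail := end_mem_tail_support_of_ne (Ne.symm hne) A₁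
  have hc₂mem : c₂ ∈ A₂.support.tail := end_mem_tail_support_of_ne hne A₂
  have hA₁path : A₁.IsPath := by
    rw [isPath_def, support_eq_cons, List.nodup_cons]
    refine ⟨fun hc => hdisj _ hc _ hc₂mem rfl, hnd₁⟩
  have hA₂path : A₂.IsPath := by
    rw [isPath_def, support_eq_cons, List.nodup_cons]
    refine ⟨fun hc => hdisj _ hc₁mem _ hc rfl, hnd₂⟩
  have hsupin : ∀ x, x ∈ w'.support → x ∈ w.support := by
    intro x hx
    rcases (w'.mem_support_iff).mp hx with rfl | h
    · exact h2
    · exact List.mem_of_mem_tail (((support_rotate w c₂ h2).perm.mem_iff).mp h)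
  have hedin : ∀ e, e ∈ w'.edges → e ∈ w.edges :=
    fun e he => ((rotate_edges w c₂ h2).perm.mem_iff).mp he
  by_cases hshort : 2 * A₁.length ≤ w.length
  · exact ⟨A₁, hA₁path,
      fun x hx => hsupin x (w'.support_takeUntil_subset hc₁' hx),
      fun e he => hedin e (w'.edges_takeUntil_subset hc₁' he), hshort⟩
  · refine ⟨A₂.reverse, hA₂path.reverse, ?_, ?_, ?_⟩
    · intro x hx
      rw [support_reverse, List.mem_reverse] at hx
      exact hsupin x (w'.support_dropUntil_subset hc₁' hx)
    · intro e he
      rw [edges_reverse, List.mem_reverse] at he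
      exact hedin e (w'.edges_dropUntil_subset hc₁' he)
    · rw [length_reverse]; omega

omit [Fintype V] [DecidableRel G.Adj] in
/-- Main surgery lemma: a short path joining two vertices of a minimal cycle,
internally avoiding the cycle and edge-disjoint from it, is a contradiction. -/
lemma shortcut_contra (S : Finset V) {a c₁ c₂ : V} (w : G.Walk a a) (hw : w.IsCycle)
    (hwS : ∀ x ∈ w.support, x ∈ S)
    (hmin : ∀ (b : V) (w' : G.Walk b b), w'.IsCycle → (∀ x ∈ w'.support, x ∈ S) →
      w.length ≤ w'.length)
    (hg : 11 ≤ w.length)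
    (h1 : c₁ ∈ w.support) (h2 : c₂ ∈ w.support) (hne : c₁ ≠ c₂)
    (Q : G.Walk c₁ c₂) (hQp : Q.IsPath) (hQS : ∀ x ∈ Q.support, x ∈ S)
    (hQlen : Q.length ≤ 4)
    (hQint : ∀ x ∈ Q.support, x ≠ c₁ → x ≠ c₂ → x ∉ w.support)
    (hQe : ∀ e ∈ Q.edges, e ∉ w.edges) : False := by
  obtain ⟨A, hAp, hAsup, hAed, hAlen⟩ := cycle_arc w hw h1 h2 hne
  set W := Q.append A with hW
  have hWlen : W.length = Q.length + A.length := length_append _ _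
  have hQpos : 1 ≤ Q.length := by
    rcases Nat.eq_zero_or_pos Q.length with h | h
    · exact absurd (eq_of_length_eq_zero h) hne
    · exact h
  have hWcyc : W.IsCycle := by
    rw [isCycle_def]
    refine ⟨⟨?_⟩, ?_, ?_⟩
    · rw [hW, edges_append, List.nodup_append]
      exact ⟨hQp.isTrail.edges_nodup, hAp.isTrail.edges_nodup,
        fun e he e' he' hee => hQe e he (by rw [hee]; exact hAed e' he')⟩
    · intro h
      have := congrArg Walk.length h
      simp only [length_nil] at this
      omega
    · rw [hW, tail_support_append, List.nodup_append]
      have hq := hQp.support_nodup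
      have ha := hAp.support_nodup
      rw [support_eq_cons, List.nodup_cons] at hq ha
      refine ⟨hq.2, ha.2, fun x hx x' hx' hxx => ?_⟩
      subst hxx
      have hxQ : x ∈ Q.support := List.mem_of_mem_tail hx
      have hxA : x ∈ A.support := List.mem_of_mem_tail hx'
      have hx1 : x ≠ c₁ := fun h => hq.1 (h ▸ hx)
      have hx2 : x ≠ c₂ := fun h => ha.1 (h ▸ hx')
      exact hQint x hxQ hx1 hx2 (hAsup x hxA)
  have hWS : ∀ x ∈ W.support, x ∈ S := by
    intro x hx
    rw [hW, mem_support_append_iff] at hx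
    rcases hx with hx | hx
    · exact hQS x hx
    · exact hwS x (hAsup x hx)
  have := hmin c₁ W hWcyc hWS
  omega

omit [Fintype V] [DecidableEq V] [DecidableRel G.Adj] in
lemma tri_cycle {c u y : V} (h1 : G.Adj c u) (h2 : G.Adj u y) (h3 : G.Adj y c) :
    ∃ w : G.Walk c c, w.IsCycle ∧ w.length = 3 := by
  refine ⟨Walk.cons h1 (Walk.cons h2 (Walk.cons h3 Walk.nil)), ?_, rfl⟩
  rw [Walk.cons_isCycle_iff]
  refine ⟨?_, ?_⟩ <;>
    simp [Walk.isPath_def, Sym2.eq_iff, h1.ne, h2.ne, h3.ne, h1.ne', h2.ne', h3.ne']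

omit [Fintype V] [DecidableEq V] [DecidableRel G.Adj] in
lemma quad_cycle {v u₁ c u₂ : V} (h1 : G.Adj v u₁) (h2 : G.Adj u₁ c) (h3 : G.Adj c u₂)
    (h4 : G.Adj u₂ v) (hvc : v ≠ c) (hu : u₁ ≠ u₂) :
    ∃ w : G.Walk v v, w.IsCycle ∧ w.length = 4 := by
  refine ⟨Walk.cons h1 (Walk.cons h2 (Walk.cons h3 (Walk.cons h4 Walk.nil))), ?_, rfl⟩
  rw [Walk.cons_isCycle_iff]
  refine ⟨?_, ?_⟩ <;>
    simp [Walk.isPath_def, Sym2.eq_iff, h1.ne, h2.ne, h3.ne, h4.ne, h1.ne', h2.ne', h3.ne',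
      h4.ne', hvc, hvc.symm, hu, hu.symm]

/-- If every vertex of `S` has at least two neighbours in `S`, there is a cycle inside `S`. -/
lemma exists_cycle_in (S : Finset V) (v₀ : V) (hv₀ : v₀ ∈ S)
    (hdeg : ∀ v ∈ S, 2 ≤ (G.neighborFinset v ∩ S).card) :
    ∃ (b : V) (w : G.Walk b b), w.IsCycle ∧ ∀ x ∈ w.support, x ∈ S := by
  classical
  set Q : ℕ → Prop := fun n => ∃ (u z : V) (p : G.Walk u z),
    p.IsPath ∧ (∀ x ∈ p.support, x ∈ S) ∧ p.length = n with hQdef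
  have hQ0 : Q 0 := ⟨v₀, v₀, Walk.nil, by simp, by simp [hv₀], rfl⟩
  have hbound : ∀ n, Q n → n < S.card := by
    rintro n ⟨u, z, p, hp, hpS, rfl⟩
    have h1 : p.support.toFinset ⊆ S := fun x hx => hpS x (List.mem_toFinset.mp hx)
    have h2 : p.support.toFinset.card = p.support.length :=
      List.toFinset_card_of_nodup hp.support_nodup
    have := Finset.card_le_card h1
    rw [h2, Walk.length_support] at this
    omega
  set N := Nat.findGreatest Q S.card with hN
  have hQN : Q N := Nat.findGreatest_spec (Nat.zero_le _) hQ0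
  have hmax : ∀ n, Q n → n ≤ N := by
    intro n hn
    by_contra hlt
    exact Nat.findGreatest_is_greatest (lt_of_not_ge hlt) (le_of_lt (hbound n hn)) hn
  obtain ⟨u, z, p, hp, hpS, hplen⟩ := hQN
  have huS : u ∈ S := hpS u p.start_mem_support
  have hnbr : ∀ y, y ∈ G.neighborFinset u ∩ S → y ∈ p.support := by
    intro y hy
    rw [Finset.mem_inter, mem_neighborFinset] at hy
    by_contra hy'
    have hcons : (Walk.cons hy.1.symm p).IsPath := hp.cons hy'
    have : Q (N + 1) := ⟨y, z, Walk.cons hy.1.symm p, hcons,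
      by intro x hx; rw [Walk.support_cons, List.mem_cons] at hx
         rcases hx with rfl | hx; exacts [hy.2, hpS x hx], by simp [hplen]⟩
    have := hmax _ this
    omega
  obtain ⟨y₁, hy₁, y₂, hy₂, hyne⟩ := Finset.one_lt_card.mp (lt_of_lt_of_le one_lt_two (hdeg u huS))
  have huz : u ≠ z := by
    rintro rfl
    have hnil : p = Walk.nil := (Walk.isPath_iff_eq_nil).mp hp
    have h1 := hnbr y₁ hy₁
    rw [hnil] at h1
    rw [Walk.mem_support_nil_iff] at h1
    rw [Finset.mem_inter, mem_neighborFinset] at hy₁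
    exact hy₁.1.ne' h1
  obtain ⟨c, hadjc, q, rfl⟩ := Walk.exists_eq_cons_of_ne huz p
  obtain ⟨y, hy, hyc⟩ : ∃ y, y ∈ G.neighborFinset u ∩ S ∧ y ≠ c := by
    by_cases h : y₁ = c
    · exact ⟨y₂, hy₂, fun hh => hyne (h ▸ hh ▸ rfl)⟩
    · exact ⟨y₁, hy₁, h⟩
  have hadjy : G.Adj u y := (mem_neighborFinset _ _ _).mp (Finset.mem_inter.mp hy).1
  have hysup : y ∈ (Walk.cons hadjc q).support := hnbr y hy
  set T := (Walk.cons hadjc q).takeUntil y hysup with hT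
  have hTpath : T.IsPath := hp.takeUntil hysup
  have hedge : s(y, u) ∉ T.edges := by
    intro hmem
    have hmem' : s(u, y) ∈ T.edges := by rwa [Sym2.eq_swap] at hmem
    obtain ⟨c', hadj', q', hq'⟩ := Walk.exists_eq_cons_of_ne hadjy.ne T
    have h1 : y = c' := by
      apply edge_head hadj' q' (hq' ▸ hTpath) (hq' ▸ hmem')
    have h2 : s(u, c') ∈ (Walk.cons hadjc q).edges := by
      apply Walk.edges_takeUntil_subset _ hysup
      rw [← hT, hq']; simp
    have h3 : c' = c := edge_head hadjc q hp h2
    exact hyc (h1.trans h3)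
  refine ⟨y, Walk.cons hadjy.symm T, ?_, ?_⟩
  · exact (Walk.cons_isCycle_iff T hadjy.symm).mpr ⟨hTpath, hedge⟩
  · intro x hx
    rw [Walk.support_cons, List.mem_cons] at hx
    rcases hx with rfl | hx
    · exact (Finset.mem_inter.mp hy).2
    · exact hpS x (Walk.support_takeUntil_subset _ hysup hx)

/-- Greedy extraction of `k` pairwise independent cycles inside `S`,
given min-degree `k+1` within `S`. -/
lemma greedy (hgirth : ∀ (v : V) (w : G.Walk v v), w.IsCycle → 11 ≤ w.length) :
    ∀ (k : ℕ) (S : Finset V), S.Nonempty →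
    (∀ v ∈ S, k + 1 ≤ (G.neighborFinset v ∩ S).card) →
    ∃ L : List ((v : V) × G.Walk v v), L.length = k ∧
      (∀ p ∈ L, p.2.IsCycle) ∧ (∀ p ∈ L, ∀ x ∈ p.2.support, x ∈ S) ∧
      L.Pairwise (fun p q => ∀ x ∈ p.2.support, ∀ y ∈ q.2.support, x ≠ y ∧ ¬ G.Adj x y) := by
  intro k
  induction k with
  | zero =>
    intro S _ _
    exact ⟨[], rfl, by simp, by simp, by simp⟩
  | succ k IH =>
    intro S hSne hdeg
    classical
    obtain ⟨v₀, hv₀⟩ := hSne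
    have hdeg2 : ∀ v ∈ S, 2 ≤ (G.neighborFinset v ∩ S).card := by
      intro v hv; have := hdeg v hv; omega
    obtain ⟨b₀, C₀, hC₀, hC₀S⟩ := exists_cycle_in S v₀ hv₀ hdeg2
    have hPex : ∃ n, ∃ (bb : V) (ww : G.Walk bb bb), ww.IsCycle ∧ (∀ x ∈ ww.support, x ∈ S) ∧
        ww.length = n := ⟨C₀.length, b₀, C₀, hC₀, hC₀S, rfl⟩
    obtain ⟨a, C, hCcyc, hCS, hClen⟩ := Nat.find_spec hPex
    have hmin : ∀ (b' : V) (w' : G.Walk b' b'), w'.IsCycle → (∀ x ∈ w'.support, x ∈ S) →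
        C.length ≤ w'.length := by
      intro b' w' hc hs
      rw [hClen]
      exact Nat.find_min' hPex ⟨b', w', hc, hs, rfl⟩
    have hg11 : 11 ≤ C.length := hgirth a C hCcyc
    set S' : Finset V := S.filter (fun x => x ∉ C.support ∧ ∀ c ∈ C.support, ¬ G.Adj x c)
      with hS'def
    have hS'sub : S' ⊆ S := Finset.filter_subset _ _
    have hS'mem : ∀ x, x ∈ S' ↔ x ∈ S ∧ x ∉ C.support ∧ ∀ c ∈ C.support, ¬ G.Adj x c := by
      intro x; rw [hS'def, Finset.mem_filter]
    have hnb2 : ∀ x, x ∈ S → x ∉ C.support → ∀ c₁ c₂, c₁ ∈ C.support → c₂ ∈ C.support →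
        G.Adj x c₁ → G.Adj x c₂ → c₁ = c₂ := by
      intro x hxS hxC c₁ c₂ hc₁ hc₂ ha₁ ha₂
      by_contra hne
      refine shortcut_contra S C hCcyc hCS hmin hg11 hc₁ hc₂ hne
        (Walk.cons ha₁.symm (Walk.cons ha₂ Walk.nil)) ?_ ?_ (by norm_num) ?_ ?_
      · have h1 : c₁ ≠ x := ha₁.ne'
        have h2 : x ≠ c₂ := ha₂.ne
        rw [Walk.isPath_def]
        simp [h1, h2, hne]
      · intro z hz
        simp only [Walk.support_cons, Walk.support_nil, List.mem_cons,
          List.mem_singleton, List.not_mem_nil, or_false] at hz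
        rcases hz with rfl | rfl | rfl
        · exact hCS z hc₁
        · exact hxS
        · exact hCS z hc₂
      · intro z hz hz1 hz2
        simp only [Walk.support_cons, Walk.support_nil, List.mem_cons,
          List.mem_singleton, List.not_mem_nil, or_false] at hz
        rcases hz with rfl | rfl | rfl
        · exact absurd rfl hz1
        · exact hxC
        · exact absurd rfl hz2
      · intro e he
        simp only [Walk.edges_cons, Walk.edges_nil, List.mem_cons,
          List.mem_singleton, List.not_mem_nil, or_false] at he
        rcases he with rfl | rfl
        · exact fun hein => hxC (C.snd_mem_support_of_mem_edges hein)
        · exact fun hein => hxC (C.fst_mem_support_of_mem_edges hein)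
    have hchord : ∀ c₀ c'', c₀ ∈ C.support → c'' ∈ C.support → G.Adj c₀ c'' →
        s(c₀, c'') ∈ C.edges := by
      intro c₀ c'' h0 h'' hadj
      by_contra hnotedge
      refine shortcut_contra S C hCcyc hCS hmin hg11 h0 h'' hadj.ne
        (Walk.cons hadj Walk.nil) ?_ ?_ (by norm_num) ?_ ?_
      · rw [Walk.isPath_def]; simp [hadj.ne]
      · intro z hz
        simp only [Walk.support_cons, Walk.support_nil, List.mem_cons,
          List.mem_singleton, List.not_mem_nil, or_false] at hz
        rcases hz with rfl | rfl
        · exact hCS z h0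
        · exact hCS z h''
      · intro z hz hz1 hz2
        simp only [Walk.support_cons, Walk.support_nil, List.mem_cons,
          List.mem_singleton, List.not_mem_nil, or_false] at hz
        rcases hz with rfl | rfl
        · exact absurd rfl hz1
        · exact absurd rfl hz2
      · intro e he
        simp only [Walk.edges_cons, Walk.edges_nil, List.mem_cons,
          List.not_mem_nil, or_false] at he
        rcases he with rfl
        · exact hnotedge
    have hpath2 : ∀ v, v ∈ S → v ∉ C.support → (∀ c ∈ C.support, ¬ G.Adj v c) →
        ∀ u₁ u₂, u₁ ∈ S → u₂ ∈ S → G.Adj v u₁ → G.Adj v u₂ → u₁ ≠ u₂ →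
        ∀ c₁ c₂, c₁ ∈ C.support → c₂ ∈ C.support → G.Adj u₁ c₁ → G.Adj u₂ c₂ → False := by
      intro v hvS hvC hvN u₁ u₂ h1S h2S hvu₁ hvu₂ hu12 c₁ c₂ hc₁ hc₂ ha₁ ha₂
      have hu₁C : u₁ ∉ C.support := fun h => hvN u₁ h hvu₁
      have hu₂C : u₂ ∉ C.support := fun h => hvN u₂ h hvu₂
      by_cases hcc : c₁ = c₂
      · subst hcc
        obtain ⟨w4, hw4, hlen4⟩ := quad_cycle hvu₁ ha₁ ha₂.symm hvu₂.symm
          (fun h => hvC (h ▸ hc₁)) hu12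
        have := hgirth v w4 hw4
        omega
      · have hvc₁ : v ≠ c₁ := fun h => hvC (h ▸ hc₁)
        have hvc₂ : v ≠ c₂ := fun h => hvC (h ▸ hc₂)
        have hu₁c₂ : u₁ ≠ c₂ := fun h => hu₁C (h ▸ hc₂)
        have hu₂c₁ : u₂ ≠ c₁ := fun h => hu₂C (h ▸ hc₁)
        refine shortcut_contra S C hCcyc hCS hmin hg11 hc₁ hc₂ hcc
          (Walk.cons ha₁.symm (Walk.cons hvu₁.symm (Walk.cons hvu₂ (Walk.cons ha₂ Walk.nil))))
          ?_ ?_ (by norm_num) ?_ ?_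
        · rw [Walk.isPath_def]
          simp [ha₁.ne', hvc₁.symm, hu₂c₁.symm, hcc, hvu₁.ne', hu12, hu₁c₂,
            hvu₂.ne, hvc₂, ha₂.ne]
        · intro z hz
          simp only [Walk.support_cons, Walk.support_nil, List.mem_cons,
            List.mem_singleton, List.not_mem_nil, or_false] at hz
          rcases hz with rfl | rfl | rfl | rfl | rfl
          · exact hCS z hc₁
          · exact h1S
          · exact hvS
          · exact h2S
          · exact hCS z hc₂
        · intro z hz hz1 hz2
          simp only [Walk.support_cons, Walk.support_nil, List.mem_cons,
            List.mem_singleton, List.not_mem_nil, or_false] at hz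
          rcases hz with rfl | rfl | rfl | rfl | rfl
          · exact absurd rfl hz1
          · exact hu₁C
          · exact hvC
          · exact hu₂C
          · exact absurd rfl hz2
        · intro e he
          simp only [Walk.edges_cons, Walk.edges_nil, List.mem_cons,
            List.not_mem_nil, or_false] at he
          rcases he with rfl | rfl | rfl | rfl
          · exact fun hein => hu₁C (C.snd_mem_support_of_mem_edges hein)
          · exact fun hein => hu₁C (C.fst_mem_support_of_mem_edges hein)
          · exact fun hein => hvC (C.fst_mem_support_of_mem_edges hein)
          · exact fun hein => hu₂C (C.fst_mem_support_of_mem_edges hein)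
    have htri : ∀ u y c', u ∈ S → y ∈ S → u ∉ C.support → y ∉ C.support →
        G.Adj a u → G.Adj u y → c' ∈ C.support → G.Adj y c' → False := by
      intro u y c' huS hyS huC hyC hau huy hc' hyc'
      have ha : a ∈ C.support := C.start_mem_support
      by_cases h : c' = a
      · subst h
        obtain ⟨w3, hw3, hlen3⟩ := tri_cycle hau huy hyc'
        have := hgirth c' w3 hw3
        omega
      · have hay : a ≠ y := fun hh => hyC (hh ▸ ha)
        have huc' : u ≠ c' := fun hh => huC (hh ▸ hc')
        refine shortcut_contra S C hCcyc hCS hmin hg11 ha hc' (Ne.symm h)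
          (Walk.cons hau (Walk.cons huy (Walk.cons hyc' Walk.nil))) ?_ ?_ (by norm_num) ?_ ?_
        · rw [Walk.isPath_def]
          simp [hau.ne, hay, Ne.symm h, huy.ne, huc', hyc'.ne]
        · intro z hz
          simp only [Walk.support_cons, Walk.support_nil, List.mem_cons,
            List.mem_singleton, List.not_mem_nil, or_false] at hz
          rcases hz with rfl | rfl | rfl | rfl
          · exact hCS z ha
          · exact huS
          · exact hyS
          · exact hCS z hc'
        · intro z hz hz1 hz2
          simp only [Walk.support_cons, Walk.support_nil, List.mem_cons,
            List.mem_singleton, List.not_mem_nil, or_false] at hz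
          rcases hz with rfl | rfl | rfl | rfl
          · exact absurd rfl hz1
          · exact huC
          · exact hyC
          · exact absurd rfl hz2
        · intro e he
          simp only [Walk.edges_cons, Walk.edges_nil, List.mem_cons,
            List.not_mem_nil, or_false] at he
          rcases he with rfl | rfl | rfl
          · exact fun hein => huC (C.snd_mem_support_of_mem_edges hein)
          · exact fun hein => huC (C.fst_mem_support_of_mem_edges hein)
          · exact fun hein => hyC (C.fst_mem_support_of_mem_edges hein)
    have hdegS' : ∀ v ∈ S', k + 1 ≤ (G.neighborFinset v ∩ S').card := by
      intro v hvS'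
      obtain ⟨hvS, hvC, hvN⟩ := (hS'mem v).mp hvS'
      set A := G.neighborFinset v ∩ S with hA
      set B := G.neighborFinset v ∩ S' with hB
      have hBA : B ⊆ A := Finset.inter_subset_inter (le_refl _) hS'sub
      have hgetc : ∀ u, u ∈ A \ B → G.Adj v u ∧ u ∈ S ∧ u ∉ C.support ∧
          ∃ c, c ∈ C.support ∧ G.Adj u c := by
        intro u hu
        rw [Finset.mem_sdiff, hA, hB, Finset.mem_inter, Finset.mem_inter,
          mem_neighborFinset] at hu
        obtain ⟨⟨hadj, huS⟩, hnot⟩ := hu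
        have hunS' : u ∉ S' := fun h => hnot ⟨hadj, h⟩
        rw [hS'mem] at hunS'
        push_neg at hunS'
        have huC : u ∉ C.support := fun h => hvN u h hadj
        obtain ⟨c, hc, hadjc⟩ := hunS' huS huC
        exact ⟨hadj, huS, huC, c, hc, hadjc⟩
      have hsd : (A \ B).card ≤ 1 := by
        rw [Finset.card_le_one]
        intro u₁ h₁ u₂ h₂
        by_contra hne
        obtain ⟨hadj₁, h1S, h1C, c₁, hc₁, hac₁⟩ := hgetc u₁ h₁
        obtain ⟨hadj₂, h2S, h2C, c₂, hc₂, hac₂⟩ := hgetc u₂ h₂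
        exact hpath2 v hvS hvC hvN u₁ u₂ h1S h2S hadj₁ hadj₂ hne c₁ c₂ hc₁ hc₂ hac₁ hac₂
      have hAcard := hdeg v hvS
      have := Finset.card_le_card_sdiff_add_card (s := A) (t := B)
      rw [← hA] at hAcard
      omega
    rcases Nat.eq_zero_or_pos k with rfl | hkpos
    · exact ⟨[⟨a, C⟩], rfl, by simpa using hCcyc, by simpa using hCS,
        List.pairwise_singleton _ _⟩
    · -- S' is nonempty
      have hS'ne : S'.Nonempty := by
        have ha : a ∈ C.support := C.start_mem_support
        have haS : a ∈ S := hCS a ha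
        obtain ⟨y₀, h₀, q₀, hCeq⟩ := Walk.not_nil_iff.mp hCcyc.not_nil
        have hq₀path : q₀.IsPath := by
          have h := hCcyc
          rw [hCeq, Walk.cons_isCycle_iff] at h
          exact h.1
        obtain ⟨z, hz, q', hq'eq⟩ := Walk.exists_eq_cons_of_ne h₀.ne q₀.reverse
        have hrevpath : (Walk.cons hz q').IsPath := hq'eq ▸ hq₀path.reverse
        have hsub : ∀ c'', c'' ∈ G.neighborFinset a ∩ S → c'' ∈ C.support →
            c'' = y₀ ∨ c'' = z := by
          intro c'' hc'' hmem
          rw [Finset.mem_inter, mem_neighborFinset] at hc''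
          have hedge := hchord a c'' ha hmem hc''.1
          rw [hCeq, Walk.edges_cons, List.mem_cons] at hedge
          rcases hedge with heq | hmem'
          · left
            rw [Sym2.eq_iff] at heq
            rcases heq with ⟨-, h⟩ | ⟨h1, -⟩
            · exact h
            · exact absurd h1 h₀.ne
          · right
            have : s(a, c'') ∈ q₀.reverse.edges := by
              rw [Walk.edges_reverse, List.mem_reverse]; exact hmem'
            rw [hq'eq] at this
            exact edge_head hz q' hrevpath this
        have h3a : 3 ≤ (G.neighborFinset a ∩ S).card := le_trans (by omega) (hdeg a haS)
        obtain ⟨u, huNA, huC⟩ : ∃ u, u ∈ G.neighborFinset a ∩ S ∧ u ∉ C.support := by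
          by_contra h
          push_neg at h
          have hsub2 : G.neighborFinset a ∩ S ⊆ {y₀, z} := by
            intro c'' hcm
            rcases hsub c'' hcm (h c'' hcm) with rfl | rfl <;> simp
          have := Finset.card_le_card hsub2
          have hc2 : ({y₀, z} : Finset V).card ≤ 2 := Finset.card_insert_le _ _ |>.trans
            (by simp)
          omega
        rw [Finset.mem_inter, mem_neighborFinset] at huNA
        obtain ⟨hadjau, huS⟩ := huNA
        obtain ⟨y, hyNA, hyC⟩ : ∃ y, y ∈ G.neighborFinset u ∩ S ∧ y ∉ C.support := by
          by_contra h
          push_neg at h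
          have hsub2 : G.neighborFinset u ∩ S ⊆ {a} := by
            intro c' hcm
            have hc'C := h c' hcm
            rw [Finset.mem_inter, mem_neighborFinset] at hcm
            have := hnb2 u huS huC a c' ha hc'C hadjau.symm hcm.1
            simp [← this]
          have := Finset.card_le_card hsub2
          have h3u : 3 ≤ (G.neighborFinset u ∩ S).card := le_trans (by omega) (hdeg u huS)
          simp at this
          omega
        rw [Finset.mem_inter, mem_neighborFinset] at hyNA
        obtain ⟨hadjuy, hyS⟩ := hyNA
        refine ⟨y, (hS'mem y).mpr ⟨hyS, hyC, ?_⟩⟩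
        intro c hc hadj
        exact htri u y c huS hyS huC hyC hadjau hadjuy hc hadj
      obtain ⟨L', hlen', hcyc', hsup', hpair'⟩ := IH S' hS'ne hdegS'
      refine ⟨⟨a, C⟩ :: L', by simp [hlen'], ?_, ?_, ?_⟩
      · intro p hp
        rcases List.mem_cons.mp hp with rfl | hp
        · exact hCcyc
        · exact hcyc' p hp
      · intro p hp
        rcases List.mem_cons.mp hp with rfl | hp
        · exact hCS
        · exact fun x hx => hS'sub (hsup' p hp x hx)
      · rw [List.pairwise_cons]
        refine ⟨?_, hpair'⟩
        intro q hq x hx y hy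
        have hyS' : y ∈ S' := hsup' q hq y hy
        rw [hS'mem] at hyS'
        exact ⟨fun h => hyS'.2.1 (h ▸ hx), fun h => hyS'.2.2 x hx h.symm⟩


omit [Fintype V] [DecidableEq V] [DecidableRel G.Adj] in
lemma toIndep {k : ℕ} (L : List ((v : V) × G.Walk v v)) (hlen : L.length = k)
    (hcyc : ∀ p ∈ L, p.2.IsCycle)
    (hpair : L.Pairwise fun p q => ∀ x ∈ p.2.support, ∀ y ∈ q.2.support,
      x ≠ y ∧ ¬ G.Adj x y) :
    HasIndepCycles G k := by
  subst hlen
  refine ⟨fun i => (L.get i).1, fun i => (L.get i).2, fun i => hcyc _ (L.get_mem i), ?_⟩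
  intro i j hij x hx y hy
  rw [List.pairwise_iff_get] at hpair
  rcases lt_or_gt_of_ne hij with h | h
  · exact hpair i j h x hx y hy
  · obtain ⟨h1, h2⟩ := hpair j i h y hy x hx
    exact ⟨h1.symm, fun hh => h2 hh.symm⟩

lemma count_bound (k : ℕ) (hk : 1 ≤ k)
    (hgirth : ∀ (v : V) (w : G.Walk v v), w.IsCycle → 11 ≤ w.length)
    (hfree : ¬ HasIndepCycles G k) :
    ∀ (n : ℕ) (S : Finset V), S.card = n →
      (G.edgeFinset.filter (fun e => ∀ u ∈ e, u ∈ S)).card ≤ k * S.card := by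
  intro n
  induction n using Nat.strong_induction_on with
  | _ n IHn =>
    intro S hcard
    by_cases hex : ∃ v ∈ S, (G.neighborFinset v ∩ S).card ≤ k
    · obtain ⟨v, hvS, hvdeg⟩ := hex
      have hsplit := Finset.card_filter_add_card_filter_not
        (s := G.edgeFinset.filter (fun e => ∀ u ∈ e, u ∈ S)) (p := fun e => v ∈ e)
      rw [Finset.filter_filter, Finset.filter_filter] at hsplit
      have h2 : (G.edgeFinset.filter (fun e => (∀ u ∈ e, u ∈ S) ∧ v ∈ e)) ⊆
          (G.neighborFinset v ∩ S).image (fun u => s(v, u)) := by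
        intro e he
        rw [Finset.mem_filter, mem_edgeFinset] at he
        obtain ⟨hadj, hallS, hv⟩ := he
        obtain ⟨u, rfl⟩ := Sym2.mem_iff_exists.mp hv
        rw [SimpleGraph.mem_edgeSet] at hadj
        refine Finset.mem_image.mpr ⟨u, Finset.mem_inter.mpr
          ⟨(mem_neighborFinset _ _ _).mpr hadj, hallS u (Sym2.mem_mk_right _ _)⟩, rfl⟩
      have h2card : (G.edgeFinset.filter (fun e => (∀ u ∈ e, u ∈ S) ∧ v ∈ e)).card ≤ k :=
        le_trans (Finset.card_le_card h2) (le_trans Finset.card_image_le hvdeg)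
      have h1 : (G.edgeFinset.filter (fun e => (∀ u ∈ e, u ∈ S) ∧ ¬ v ∈ e)) ⊆
          (G.edgeFinset.filter (fun e => ∀ u ∈ e, u ∈ S.erase v)) := by
        intro e he
        rw [Finset.mem_filter] at he ⊢
        refine ⟨he.1, fun u hu => Finset.mem_erase.mpr
          ⟨fun hh => he.2.2 (hh ▸ hu), he.2.1 u hu⟩⟩
      have hvpos : 1 ≤ S.card := Finset.card_pos.mpr ⟨v, hvS⟩
      have hercard : (S.erase v).card = n - 1 := by
        rw [Finset.card_erase_of_mem hvS, hcard]
      have h1card := le_trans (Finset.card_le_card h1)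
        (IHn (n - 1) (by omega) (S.erase v) hercard)
      rw [hercard] at h1card
      obtain ⟨m, hm⟩ : ∃ m, S.card = m + 1 := ⟨S.card - 1, by omega⟩
      have : k * (n - 1) = k * m := by rw [← hcard, hm]; simp
      rw [this] at h1card
      rw [hm]
      have : k * (m + 1) = k * m + k := by ring
      omega
    · push_neg at hex
      rcases S.eq_empty_or_nonempty with rfl | hSne
      · have hempty : (G.edgeFinset.filter (fun e => ∀ u ∈ e, u ∈ (∅ : Finset V))) = ∅ := by
          apply Finset.filter_false_of_mem
          intro e he hall
          exact absurd (hall _ (Sym2.out_fst_mem e)) (Finset.notMem_empty _)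
        rw [hempty]
        simp
      · obtain ⟨L, hlen, hcyc, _, hpair⟩ := greedy hgirth k S hSne
          (fun v hv => by have := hex v hv; omega)
        exact absurd (toIndep L hlen hcyc hpair) hfree


end Stmt6Aux

/-- For every `k ≥ 1`, every `O_k`-free graph of girth at least 11
with at least one vertex has average degree at most `2k`, i.e. `|E(G)| ≤ k * |V(G)|`. -/
theorem stmt6 (k : ℕ) (hk : 1 ≤ k) (V : Type) [Fintype V] [Nonempty V]
    (G : SimpleGraph V) (hfree : OkFree G k) (hgirth : GirthAtLeast G 11) :
    Nat.card G.edgeSet ≤ k * Fintype.card V := by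
  classical
  have hb := Stmt6Aux.count_bound (G := G) k hk hgirth hfree Finset.univ.card Finset.univ rfl
  have hall : G.edgeFinset.filter (fun e => ∀ u ∈ e, u ∈ (Finset.univ : Finset V)) =
      G.edgeFinset := by
    apply Finset.filter_true_of_mem
    intro e _
    intro u _
    exact Finset.mem_univ u
  rw [hall] at hb
  have hN : Nat.card G.edgeSet = G.edgeFinset.card := by
    rw [Nat.card_eq_fintype_card, SimpleGraph.edgeFinset_card]
  rw [hN]
  simpa [Finset.card_univ] using hb
end
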